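/- arXiv:2304.05456 — 5 statements merged into one kernel-verified Lean document; each statement's English description precedes it below -/
import Mathlib

section
/- For every d-dimensional pseudo-cube G = (V,E) and every nonempty set U of vertices of size s, the edge expansion satisfies φ_G(U) ≥ d − log₂ s. -/
/-!
We model a finite `d`-regular graph with a proper edge `d`-coloring
(each vertex meets exactly one edge of each color) by giving, for every
color `i : Fin d`, a fixed-point-free involution `m i` on the vertices:
the color-`i` edges are the pairs `{v, m i v}`.
-/
structure EdgeColoredGraph (V : Type) (d : ℕ) where
  /-- `m i v` is the other endpoint of the unique color-`i` edge at `v`. -/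
  m : Fin d → V → V
  invol : ∀ i v, m i (m i v) = v
  ne : ∀ i v, m i v ≠ v

namespace EdgeColoredGraph

variable {V : Type} {d : ℕ}

/-- `G.ReachIn S u v` : `v` is reachable from `u` using only edges whose
color lies in `S`. -/
def ReachIn (G : EdgeColoredGraph V d) (S : Set (Fin d)) : V → V → Prop :=
  Relation.ReflTransGen (fun a b => ∃ i ∈ S, G.m i a = b)

/-- Color independence: for every color `i`, contracting all edges of
color `≠ i` produces no self-loop, i.e. no color-`i` edge has its two
endpoints joined by a path avoiding color `i`. -/
def IsPseudoCube (G : EdgeColoredGraph V d) : Prop :=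
  ∀ (i : Fin d) (v : V), ¬ G.ReachIn {j | j ≠ i} v (G.m i v)

/-- `∂(U)`: the number of edges with exactly one endpoint in `U`
(each such edge is counted once, at its endpoint inside `U`). -/
def boundary [Fintype V] [DecidableEq V] (G : EdgeColoredGraph V d) (U : Finset V) : ℕ :=
  ∑ i : Fin d, (U.filter fun v => G.m i v ∉ U).card

end EdgeColoredGraph

namespace PseudoCubeProof

open EdgeColoredGraph Finset

variable {V : Type} {d : ℕ}

/-- One step inside `U` using a color in `T`. -/
def Step (G : EdgeColoredGraph V d) (T : Finset (Fin d)) (U : Finset V) (a b : V) : Prop :=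
  a ∈ U ∧ b ∈ U ∧ ∃ i ∈ T, G.m i a = b

lemma step_symm (G : EdgeColoredGraph V d) (T : Finset (Fin d)) (U : Finset V) :
    Symmetric (Step G T U) := by
  rintro a b ⟨ha, hb, i, hi, rfl⟩
  exact ⟨hb, ha, i, hi, G.invol i a⟩

/-- Connectivity inside `U` using colors in `T`. -/
def Conn (G : EdgeColoredGraph V d) (T : Finset (Fin d)) (U : Finset V) : V → V → Prop :=
  Relation.ReflTransGen (Step G T U)

lemma conn_symm (G : EdgeColoredGraph V d) (T : Finset (Fin d)) (U : Finset V) :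
    Symmetric (Conn G T U) :=
  fun _ _ h => by
    induction h with
    | refl => exact Relation.ReflTransGen.refl
    | tail _ hbc ih => exact (Relation.ReflTransGen.single (step_symm G T U hbc)).trans ih

open Classical in
/-- The connected component of `v` inside `U` using colors in `T`. -/
noncomputable def comp (G : EdgeColoredGraph V d) (T : Finset (Fin d)) (U : Finset V) (v : V) :
    Finset V :=
  U.filter (Conn G T U v)

lemma mem_comp {G : EdgeColoredGraph V d} {T : Finset (Fin d)} {U : Finset V} {v w : V} :
    w ∈ comp G T U v ↔ w ∈ U ∧ Conn G T U v w := by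
  classical
  simp [comp]

lemma comp_subset (G : EdgeColoredGraph V d) (T : Finset (Fin d)) (U : Finset V) (v : V) :
    comp G T U v ⊆ U := by
  intro w hw; exact (mem_comp.1 hw).1

lemma self_mem_comp {G : EdgeColoredGraph V d} {T : Finset (Fin d)} {U : Finset V} {v : V}
    (hv : v ∈ U) : v ∈ comp G T U v :=
  mem_comp.2 ⟨hv, Relation.ReflTransGen.refl⟩

lemma comp_eq_of_conn {G : EdgeColoredGraph V d} {T : Finset (Fin d)} {U : Finset V} {v w : V}
    (h : Conn G T U v w) : comp G T U v = comp G T U w := by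
  ext x
  simp only [mem_comp]
  exact ⟨fun ⟨hx, hc⟩ => ⟨hx, (conn_symm G T U h).trans hc⟩,
    fun ⟨hx, hc⟩ => ⟨hx, h.trans hc⟩⟩

lemma comp_eq_of_mem {G : EdgeColoredGraph V d} {T : Finset (Fin d)} {U : Finset V} {v w : V}
    (hw : w ∈ comp G T U v) : comp G T U v = comp G T U w :=
  comp_eq_of_conn (mem_comp.1 hw).2

lemma fiber_eq [DecidableEq V] {G : EdgeColoredGraph V d} {T : Finset (Fin d)} {U : Finset V} {u : V}
    (hu : u ∈ U) :
    (U.filter fun w => comp G T U w = comp G T U u) = comp G T U u := by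
  ext w
  simp only [mem_filter]
  constructor
  · rintro ⟨hw, hc⟩
    rw [← hc]; exact self_mem_comp hw
  · intro hw
    exact ⟨(mem_comp.1 hw).1, (comp_eq_of_mem hw).symm⟩

lemma sum_comp [DecidableEq V] (G : EdgeColoredGraph V d) (T : Finset (Fin d)) (U : Finset V) (f : V → ℝ) :
    ∑ C ∈ U.image (comp G T U), ∑ v ∈ C, f v = ∑ v ∈ U, f v := by
  rw [← Finset.sum_fiberwise_of_maps_to (g := comp G T U)
    (fun v hv => Finset.mem_image_of_mem _ hv) f]
  refine Finset.sum_congr rfl ?_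
  intro C hC
  obtain ⟨u, hu, rfl⟩ := Finset.mem_image.1 hC
  rw [fiber_eq hu]

lemma sum_comp_card [DecidableEq V] (G : EdgeColoredGraph V d) (T : Finset (Fin d)) (U : Finset V)
    (p : V → Prop) [DecidablePred p] :
    ∑ C ∈ U.image (comp G T U), (((C.filter p).card : ℝ)) = ((U.filter p).card : ℝ) := by
  have h := sum_comp G T U (fun v => if p v then (1 : ℝ) else 0)
  simpa using h

lemma mem_comp_closure {G : EdgeColoredGraph V d} {T : Finset (Fin d)} {U : Finset V}
    {u v : V} {j : Fin d} (hj : j ∈ T) (hv : v ∈ comp G T U u) (hm : G.m j v ∈ U) :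
    G.m j v ∈ comp G T U u := by
  obtain ⟨hvU, hc⟩ := mem_comp.1 hv
  exact mem_comp.2 ⟨hm, hc.tail ⟨hvU, hm, j, hj, rfl⟩⟩

/-- The numeric inequality: `a + c·log₂ c ≤ c·log₂ n` when `a ≤ min(c, n-c)`, `1 ≤ c ≤ n`. -/
lemma numeric {a c n : ℝ} (hc : 1 ≤ c) (hcn : c ≤ n) (h1 : a ≤ c) (h2 : a ≤ n - c) :
    a + c * Real.logb 2 c ≤ c * Real.logb 2 n := by
  have hc0 : (0 : ℝ) < c := lt_of_lt_of_le one_pos hc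
  have hn0 : (0 : ℝ) < n := lt_of_lt_of_le hc0 hcn
  have hdiv : Real.logb 2 (n / c) = Real.logb 2 n - Real.logb 2 c :=
    Real.logb_div hn0.ne' hc0.ne'
  have hkey : a ≤ c * Real.logb 2 (n / c) := by
    rcases le_or_gt (2 * c) n with h | h
    · -- n/c ≥ 2, so logb 2 (n/c) ≥ 1
      have hx2 : (2 : ℝ) ≤ n / c := (le_div_iff₀ hc0).2 (by linarith)
      have : (1 : ℝ) ≤ Real.logb 2 (n / c) := by
        have := Real.logb_le_logb_of_le (b := 2) (by norm_num) (by norm_num : (0:ℝ) < 2) hx2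
        rwa [Real.logb_self_eq_one (by norm_num)] at this
      nlinarith
    · -- n < 2c : use concavity of log
      set x := n / c with hxdef
      have hx1 : (1 : ℝ) ≤ x := (le_div_iff₀ hc0).2 (by linarith)
      have hx2 : x ≤ 2 := (div_le_iff₀ hc0).2 (by linarith)
      have hconc := (strictConcaveOn_log_Ioi.concaveOn).2 (Set.mem_Ioi.2 one_pos)
        (Set.mem_Ioi.2 two_pos) (show (0:ℝ) ≤ 2 - x by linarith)
        (show (0:ℝ) ≤ x - 1 by linarith) (show (2 - x) + (x - 1) = 1 by ring)
      simp only [smul_eq_mul, Real.log_one, mul_zero, zero_add, mul_one] at hconc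
      have hin : 2 - x + (x - 1) * 2 = x := by ring
      rw [hin] at hconc
      -- hconc : (x - 1) * Real.log 2 ≤ Real.log x
      have hlog2 : (0 : ℝ) < Real.log 2 := Real.log_pos one_lt_two
      have hlb : x - 1 ≤ Real.logb 2 x := by
        rw [Real.logb, le_div_iff₀ hlog2]
        linarith
      have hax : a ≤ c * (x - 1) := by
        have : c * (x - 1) = n - c := by
          rw [hxdef, mul_sub, mul_one, mul_div_assoc', mul_div_cancel_left₀ n hc0.ne']
        linarith [this]
      calc a ≤ c * (x - 1) := hax
        _ ≤ c * Real.logb 2 x := by nlinarith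
  rw [hdiv] at hkey
  nlinarith

/-- Key lemma: in a pseudo-cube, the number of internal edges of `U`
(counted with both endpoints) within colors `T` is at most `|U| log₂ |U|`. -/
lemma key [DecidableEq V] (G : EdgeColoredGraph V d) (hG : G.IsPseudoCube)
    (T : Finset (Fin d)) :
    ∀ U : Finset V,
      (∑ j ∈ T, ((U.filter fun v => G.m j v ∈ U).card : ℝ))
        ≤ U.card * Real.logb 2 U.card := by
  induction T using Finset.induction_on with
  | empty =>
    intro U
    simp only [Finset.sum_empty]
    rcases Nat.eq_zero_or_pos U.card with h | h
    · simp [h]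
    · have h1 : (1 : ℝ) ≤ U.card := by exact_mod_cast h
      exact mul_nonneg (by positivity) (Real.logb_nonneg (by norm_num) h1)
  | @insert i T hi IH =>
    intro U
    -- per-component bound
    have hcomp : ∀ C ∈ U.image (comp G T U),
        (∑ j ∈ insert i T, ((C.filter fun v => G.m j v ∈ U).card : ℝ))
          ≤ C.card * Real.logb 2 U.card := by
      intro C hC
      obtain ⟨u, hu, rfl⟩ := Finset.mem_image.1 hC
      set C := comp G T U u with hCdef
      have hCsub : C ⊆ U := comp_subset G T U u
      have hcn : C.card ≤ U.card := Finset.card_le_card hCsub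
      have hcpos : 0 < C.card := Finset.card_pos.2 ⟨u, self_mem_comp hu⟩
      -- the colors in T stay in the component
      have hclose : ∀ j ∈ T,
          (C.filter fun v => G.m j v ∈ U) = C.filter fun v => G.m j v ∈ C := by
        intro j hj
        apply Finset.filter_congr
        intro v hv
        exact ⟨fun hm => by simpa using mem_comp_closure hj (by simpa using hv) hm,
          fun hm => hCsub hm⟩
      have hIH : (∑ j ∈ T, ((C.filter fun v => G.m j v ∈ U).card : ℝ))
          ≤ C.card * Real.logb 2 C.card := by
        calc (∑ j ∈ T, ((C.filter fun v => G.m j v ∈ U).card : ℝ))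
            = ∑ j ∈ T, ((C.filter fun v => G.m j v ∈ C).card : ℝ) := by
              refine Finset.sum_congr rfl fun j hj => by rw [hclose j hj]
          _ ≤ C.card * Real.logb 2 C.card := IH C
      -- the color-i edges leave the component
      have hA2 : (C.filter fun v => G.m i v ∈ U).card ≤ U.card - C.card := by
        have hmap : ∀ v ∈ C.filter fun v => G.m i v ∈ U, G.m i v ∈ U \ C := by
          intro v hv
          obtain ⟨hvC, hvm⟩ := Finset.mem_filter.1 hv
          refine Finset.mem_sdiff.2 ⟨hvm, fun hmem => ?_⟩
          -- v and m i v in the same component : contradiction with pseudo-cube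
          have hconn : Conn G T U v (G.m i v) :=
            (conn_symm G T U (mem_comp.1 hvC).2).trans (mem_comp.1 hmem).2
          have hreach : G.ReachIn {j | j ≠ i} v (G.m i v) := by
            refine Relation.ReflTransGen.mono ?_ _ _ hconn
            rintro a b ⟨-, -, j, hj, hv'⟩
            exact ⟨j, fun h => hi (h ▸ hj), hv'⟩
          exact hG i v hreach
        have hinj : Set.InjOn (G.m i) (C.filter fun v => G.m i v ∈ U) := by
          intro a _ b _ hab
          have := congrArg (G.m i) hab
          rwa [G.invol, G.invol] at this
        have := Finset.card_le_card_of_injOn (G.m i) hmap hinj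
        rwa [Finset.card_sdiff_of_subset hCsub] at this
      have hA1 : (C.filter fun v => G.m i v ∈ U).card ≤ C.card :=
        Finset.card_le_card (Finset.filter_subset _ _)
      rw [Finset.sum_insert hi]
      have hc1 : (1 : ℝ) ≤ C.card := by exact_mod_cast hcpos
      have hcn' : (C.card : ℝ) ≤ U.card := by exact_mod_cast hcn
      have hA1' : ((C.filter fun v => G.m i v ∈ U).card : ℝ) ≤ C.card := by exact_mod_cast hA1
      have hA2' : ((C.filter fun v => G.m i v ∈ U).card : ℝ) ≤ (U.card : ℝ) - C.card := by
        have := (Nat.cast_le (α := ℝ)).2 hA2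
        rwa [Nat.cast_sub hcn] at this
      have := numeric hc1 hcn' hA1' hA2'
      linarith
    -- sum over components
    have hswap : (∑ j ∈ insert i T, ((U.filter fun v => G.m j v ∈ U).card : ℝ))
        = ∑ C ∈ U.image (comp G T U),
            ∑ j ∈ insert i T, ((C.filter fun v => G.m j v ∈ U).card : ℝ) := by
      rw [Finset.sum_comm]
      refine Finset.sum_congr rfl fun j _ => ?_
      rw [← sum_comp_card G T U (fun v => G.m j v ∈ U)]
    have hcards : (∑ C ∈ U.image (comp G T U), (C.card : ℝ)) = U.card := by
      have h := sum_comp G T U (fun _ => (1 : ℝ))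
      simpa using h
    calc (∑ j ∈ insert i T, ((U.filter fun v => G.m j v ∈ U).card : ℝ))
        = ∑ C ∈ U.image (comp G T U),
            ∑ j ∈ insert i T, ((C.filter fun v => G.m j v ∈ U).card : ℝ) := hswap
      _ ≤ ∑ C ∈ U.image (comp G T U), (C.card : ℝ) * Real.logb 2 U.card :=
          Finset.sum_le_sum hcomp
      _ = (∑ C ∈ U.image (comp G T U), (C.card : ℝ)) * Real.logb 2 U.card := by
          rw [Finset.sum_mul]
      _ = U.card * Real.logb 2 U.card := by rw [hcards]

end PseudoCubeProof

open EdgeColoredGraph in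
/-- For every `d`-dimensional pseudo-cube `G` and every nonempty vertex set `U`
of size `s`, the edge expansion satisfies `φ_G(U) = ∂(U)/|U| ≥ d - log₂ s`. -/
theorem pseudoCube_isoperimetry {V : Type} [Fintype V] [DecidableEq V] {d : ℕ}
    (G : EdgeColoredGraph V d) (hG : G.IsPseudoCube) (U : Finset V) (hU : U.Nonempty) :
    (G.boundary U : ℝ) / U.card ≥ d - Real.logb 2 U.card := by
  classical
  have hn : (0 : ℝ) < U.card := by exact_mod_cast hU.card_pos
  have hkey := PseudoCubeProof.key G hG Finset.univ U
  have hsum : ∀ i : Fin d, ((U.filter fun v => G.m i v ∉ U).card : ℝ)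
      = U.card - ((U.filter fun v => G.m i v ∈ U).card : ℝ) := by
    intro i
    have h := Finset.card_filter_add_card_filter_not
      (s := U) (p := fun v => G.m i v ∈ U)
    have h' : ((U.filter fun v => G.m i v ∈ U).card : ℝ)
        + ((U.filter fun v => ¬ (G.m i v ∈ U)).card : ℝ) = U.card := by
      exact_mod_cast h
    linarith
  have hb : (G.boundary U : ℝ)
      = d * U.card - ∑ i : Fin d, ((U.filter fun v => G.m i v ∈ U).card : ℝ) := by
    unfold EdgeColoredGraph.boundary
    push_cast
    rw [Finset.sum_congr rfl fun i _ => hsum i, Finset.sum_sub_distrib,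
      Finset.sum_const, Finset.card_univ, Fintype.card_fin]
    push_cast
    ring
  rw [ge_iff_le, le_div_iff₀ hn]
  have : (∑ i : Fin d, ((U.filter fun v => G.m i v ∈ U).card : ℝ))
      ≤ U.card * Real.logb 2 U.card := hkey
  rw [hb]
  nlinarith
end

section
/- For every d-dimensional weak pseudo-cube G = (V,E) and every nonempty set U of vertices of size s, the edge expansion satisfies φ_G(U) ≥ d − log₂ s. -/
namespace EdgeColoredGraph

variable {V : Type} {d : ℕ}

/-- The connected component of `v` in the graph obtained from `G` by deleting
all edges of the top color `d`. -/
def comp (G : EdgeColoredGraph V (d + 1)) (v : V) : Type :=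
  {u : V // G.ReachIn {i | i ≠ Fin.last d} v u}

/-- The (d-dimensional, edge `d`-colored) graph induced by `G` on the connected
component of `v` after deleting all edges of the top color. -/
def restrict (G : EdgeColoredGraph V (d + 1)) (v : V) : EdgeColoredGraph (G.comp v) d where
  m i u := ⟨G.m i.castSucc u.1,
    u.2.tail ⟨i.castSucc, (Fin.castSucc_lt_last i).ne, rfl⟩⟩
  invol i u := Subtype.ext (G.invol i.castSucc u.1)
  ne i u h := G.ne i.castSucc u.1 (congrArg Subtype.val h)

/-- A weak pseudo-cube: `d`-regular, properly edge `d`-colored, contracting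
all edges of color `≠ d` gives no self-loop, and every connected component of
the graph with the color-`d` edges deleted is a `(d-1)`-dimensional weak
pseudo-cube.  (For `d = 1` the conditions amount to a perfect matching, which
holds automatically in this encoding.) -/
def IsWeakPseudoCube : ∀ {d : ℕ} {V : Type}, EdgeColoredGraph V d → Prop
  | 0, _, _ => True
  | _ + 1, _, G =>
      (∀ v, ¬ G.ReachIn {i | i ≠ Fin.last _} v (G.m (Fin.last _) v)) ∧
      ∀ v, IsWeakPseudoCube (G.restrict v)

/-- A weakly dual systolic graph: a weak pseudo-cube such that the multigraph
obtained by contracting all edges of color `≠ d` is simple (between any two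
connected components of the color-`d`-deleted graph there is at most one
color-`d` edge), and every connected component of the color-`d`-deleted graph
is weakly dual systolic of dimension `d - 1`. -/
def IsWeaklyDualSystolic : ∀ {d : ℕ} {V : Type}, EdgeColoredGraph V d → Prop
  | 0, _, _ => True
  | _ + 1, _, G =>
      IsWeakPseudoCube G ∧
      (∀ a b, G.ReachIn {i | i ≠ Fin.last _} a b →
        G.ReachIn {i | i ≠ Fin.last _} (G.m (Fin.last _) a) (G.m (Fin.last _) b) → a = b) ∧
      ∀ v, IsWeaklyDualSystolic (G.restrict v)

end EdgeColoredGraph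


open Real in
/-- Concavity step: for `s/2 ≤ x ≤ s`, `(s-x) log 2 ≤ x (log s - log x)`. -/
lemma wpc_key_concave {s x : ℝ} (hs : 0 < s) (h1 : s/2 ≤ x) (h2 : x ≤ s) :
    (s - x) * Real.log 2 ≤ x * (Real.log s - Real.log x) := by
  have hlin : ConcaveOn ℝ (Set.Ici (0:ℝ))
      (fun y => (Real.log s + Real.log 2) * y) := by
    refine ⟨convex_Ici 0, fun u _ w _ a b _ _ _ => le_of_eq ?_⟩
    simp only [smul_eq_mul]; ring
  have hcc : ConcaveOn ℝ (Set.Ici (0:ℝ))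
      (fun y => Real.negMulLog y + (Real.log s + Real.log 2) * y) :=
    Real.concaveOn_negMulLog.add hlin
  have hx0 : 0 < x := lt_of_lt_of_le (by linarith) h1
  have ha : (0:ℝ) ≤ 2*(s-x)/s := by
    apply div_nonneg _ hs.le; linarith
  have hb : (0:ℝ) ≤ (2*x-s)/s := by
    apply div_nonneg _ hs.le; linarith
  have hab : 2*(s-x)/s + (2*x-s)/s = 1 := by field_simp; ring
  have hmem1 : s/2 ∈ Set.Ici (0:ℝ) := by simp; positivity
  have hmem2 : s ∈ Set.Ici (0:ℝ) := by simp; positivity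
  have H := hcc.2 hmem1 hmem2 ha hb hab
  have hpt : (2*(s-x)/s) • (s/2) + ((2*x-s)/s) • s = x := by
    simp only [smul_eq_mul]; field_simp; ring
  rw [hpt] at H
  have hls2 : Real.log (s/2) = Real.log s - Real.log 2 :=
    Real.log_div (ne_of_gt hs) two_ne_zero
  have hval : (2*(s-x)/s) • (Real.negMulLog (s/2) + (Real.log s + Real.log 2) * (s/2))
      + ((2*x-s)/s) • (Real.negMulLog s + (Real.log s + Real.log 2) * s)
      = s * Real.log 2 := by
    simp only [smul_eq_mul, Real.negMulLog, hls2]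
    field_simp; ring
  rw [hval] at H
  have H' : s * Real.log 2 ≤ - x * Real.log x + (Real.log s + Real.log 2) * x := by
    simpa [Real.negMulLog] using H
  nlinarith [H']

/-- Key bound: if `e ≤ x` and `e ≤ s - x` with `0 < x ≤ s`, then
`e ≤ x (log₂ s - log₂ x)`. -/
lemma wpc_key {s x e : ℝ} (hx : 0 < x) (hxs : x ≤ s) (he1 : e ≤ x) (he2 : e ≤ s - x) :
    e ≤ x * (Real.logb 2 s - Real.logb 2 x) := by
  have hs : 0 < s := hx.trans_le hxs
  have hlog2 : (0:ℝ) < Real.log 2 := Real.log_pos one_lt_two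
  have main : e * Real.log 2 ≤ x * (Real.log s - Real.log x) := by
    rcases le_or_gt x (s/2) with h | h
    · have h2 : Real.log 2 ≤ Real.log s - Real.log x := by
        rw [← Real.log_div (ne_of_gt hs) (ne_of_gt hx)]
        apply Real.log_le_log (by norm_num)
        rw [le_div_iff₀ hx]; linarith
      calc e * Real.log 2 ≤ x * Real.log 2 :=
            mul_le_mul_of_nonneg_right he1 hlog2.le
        _ ≤ x * (Real.log s - Real.log x) := mul_le_mul_of_nonneg_left h2 hx.le
    · calc e * Real.log 2 ≤ (s - x) * Real.log 2 :=
            mul_le_mul_of_nonneg_right he2 hlog2.le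
        _ ≤ x * (Real.log s - Real.log x) := wpc_key_concave hs h.le hxs
  rw [Real.logb, Real.logb, div_sub_div_same, ← mul_div_assoc, le_div_iff₀ hlog2]
  linarith [main]

/-- Cardinality of a filtered subtype finset. -/
lemma wpc_card_subtype_filter {α : Type} [DecidableEq α] (p Q : α → Prop)
    [DecidablePred p] [DecidablePred Q] (s : Finset α) :
    ((s.subtype p).filter fun u => Q u.1).card = (s.filter fun u => p u ∧ Q u).card := by
  apply Finset.card_bij (fun (u : Subtype p) _ => u.1)
  · intro a ha
    simp only [Finset.mem_filter, Finset.mem_subtype] at ha ⊢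
    exact ⟨ha.1, a.2, ha.2⟩
  · intro a _ b _ h; exact Subtype.ext h
  · intro b hb
    simp only [Finset.mem_filter] at hb
    exact ⟨⟨b, hb.2.1⟩, by simp [Finset.mem_filter, Finset.mem_subtype, hb.1, hb.2.2], rfl⟩

namespace EdgeColoredGraph
variable {V : Type} {d : ℕ}

lemma reachIn_symm (G : EdgeColoredGraph V d) (S : Set (Fin d)) :
    Symmetric (G.ReachIn S) := by
  haveI : Std.Symm (fun a b : V => ∃ i ∈ S, G.m i a = b) := ⟨by
    rintro a b ⟨i, hi, h⟩
    exact ⟨i, hi, by rw [← h, G.invol]⟩⟩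
  exact fun a b h => @Std.Symm.symm _ _ Relation.ReflTransGen.symmetric a b h

/-- The setoid of connected components after deleting the top color. -/
def compSetoid (G : EdgeColoredGraph V (d+1)) : Setoid V :=
  ⟨fun a b => G.ReachIn {i | i ≠ Fin.last d} a b,
    ⟨fun _ => Relation.ReflTransGen.refl,
     fun h => G.reachIn_symm _ h,
     fun h1 h2 => h1.trans h2⟩⟩

end EdgeColoredGraph

/-- Main bound, multiplied form, proved by induction on the dimension. -/
theorem wpc_main_bound (d : ℕ) : ∀ (V : Type) [Fintype V] [DecidableEq V]
    (G : EdgeColoredGraph V d), G.IsWeakPseudoCube → ∀ U : Finset V, U.Nonempty →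
    (U.card : ℝ) * ((d : ℝ) - Real.logb 2 U.card) ≤ (G.boundary U : ℝ) := by
  induction d with
  | zero =>
    intro V _ _ G _ U hU
    have h0 : G.boundary U = 0 := by simp [EdgeColoredGraph.boundary]
    rw [h0]
    have h1 : (1:ℝ) ≤ (U.card : ℝ) := by exact_mod_cast hU.card_pos
    have h2 : 0 ≤ Real.logb 2 (U.card : ℝ) := Real.logb_nonneg one_lt_two h1
    push_cast
    nlinarith
  | succ d ih =>
    intro V _ _ G hG U hU
    classical
    obtain ⟨hTop, hRec⟩ : (∀ v, ¬ G.ReachIn {i | i ≠ Fin.last d} v (G.m (Fin.last d) v)) ∧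
        ∀ v, EdgeColoredGraph.IsWeakPseudoCube (G.restrict v) := hG
    set st := G.compSetoid with hst
    let mk : V → Quotient st := Quotient.mk st
    set C : Finset (Quotient st) := U.image mk with hC
    have hmkeq : ∀ a b : V, mk a = mk b ↔ G.ReachIn {i | i ≠ Fin.last d} a b :=
      fun a b => ⟨fun h => Quotient.exact h, fun h => Quotient.sound h⟩
    -- fiberwise decomposition of each color class
    have fib : ∀ p : V → Prop, ∀ _ : DecidablePred p,
        (U.filter p).card = ∑ q ∈ C, (U.filter fun u => mk u = q ∧ p u).card := by
      intro p _
      rw [Finset.card_eq_sum_card_fiberwise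
        (f := mk) (t := C)
        (fun u hu => Finset.mem_image_of_mem _ (Finset.mem_filter.mp hu).1)]
      refine Finset.sum_congr rfl fun q _ => ?_
      rw [Finset.filter_filter]
      congr 1
      apply Finset.filter_congr
      intro u _; exact ⟨fun h => ⟨h.2, h.1⟩, fun h => ⟨h.2, h.1⟩⟩
    have hdecomp : G.boundary U =
        ∑ q ∈ C, ((∑ i : Fin d,
            (U.filter fun u => mk u = q ∧ G.m i.castSucc u ∉ U).card) +
          (U.filter fun u => mk u = q ∧ G.m (Fin.last d) u ∉ U).card) := by
      rw [EdgeColoredGraph.boundary, Fin.sum_univ_castSucc, Finset.sum_add_distrib]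
      congr 1
      · rw [Finset.sum_comm]
        exact Finset.sum_congr rfl fun i _ => fib _ _
      · exact fib _ _
    have hsum : U.card = ∑ q ∈ C, (U.filter fun u => mk u = q).card :=
      Finset.card_eq_sum_card_fiberwise fun u hu => Finset.mem_image_of_mem _ hu
    -- per-class bound
    have hmain : ∀ q ∈ C,
        ((U.filter fun u => mk u = q).card : ℝ) * ((d : ℝ) + 1 - Real.logb 2 (U.card : ℝ)) ≤
        (((∑ i : Fin d, (U.filter fun u => mk u = q ∧ G.m i.castSucc u ∉ U).card) +
          (U.filter fun u => mk u = q ∧ G.m (Fin.last d) u ∉ U).card : ℕ) : ℝ) := by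
      intro q hq
      show ((U.filter fun u => mk u = q).card : ℝ) * ((d : ℝ) + 1 - Real.logb 2 (U.card : ℝ)) ≤
        (((∑ i : Fin d, (U.filter fun u => mk u = q ∧ G.m i.castSucc u ∉ U).card) +
          (U.filter fun u => mk u = q ∧ G.m (Fin.last d) u ∉ U).card : ℕ) : ℝ)
      obtain ⟨v, hvU, hvq⟩ := Finset.mem_image.mp hq
      have hmemq : ∀ u, (mk u = q ↔ G.ReachIn {i | i ≠ Fin.last d} v u) := by
        intro u
        rw [← hvq]
        constructor
        · intro h
          exact G.reachIn_symm _ ((hmkeq u v).mp h)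
        · intro h
          exact (hmkeq u v).mpr (G.reachIn_symm _ h)
      haveI : Fintype (G.comp v) := by unfold EdgeColoredGraph.comp; infer_instance
      set U' : Finset (G.comp v) :=
        U.subtype (fun u => G.ReachIn {i | i ≠ Fin.last d} v u) with hU'
      -- the non-top part of the boundary within the class is the boundary in the restriction
      have hA : ∑ i : Fin d, (U.filter fun u => mk u = q ∧ G.m i.castSucc u ∉ U).card
          = (G.restrict v).boundary U' := by
        rw [EdgeColoredGraph.boundary]
        refine Finset.sum_congr rfl fun i _ => ?_
        have h1 : (U'.filter fun u => (G.restrict v).m i u ∉ U')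
            = U'.filter fun u => G.m i.castSucc u.1 ∉ U := by
          apply Finset.filter_congr
          intro u _
          rw [not_iff_not]
          exact Finset.mem_subtype
        rw [h1]
        have h2 := wpc_card_subtype_filter (fun u => G.ReachIn {i | i ≠ Fin.last d} v u)
          (fun u => G.m i.castSucc u ∉ U) U
        refine Eq.trans ?_ (Eq.symm h2)
        congr 1
        apply Finset.filter_congr
        intro u hu
        rw [hmemq u]
      have hUne : U'.Nonempty := by
        refine ⟨⟨v, Relation.ReflTransGen.refl⟩, ?_⟩
        rw [hU']; refine Finset.mem_subtype.mpr ?_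
        exact hvU
      have hcardU' : U'.card = (U.filter fun u => mk u = q).card := by
        rw [hU']; refine (Finset.card_subtype _ _).trans ?_
        congr 1
        apply Finset.filter_congr
        intro u _
        rw [hmemq u]
      have hIH := ih (G.comp v) (G.restrict v) (hRec v) U' hUne
      rw [← hA, hcardU'] at hIH
      -- last-color internal edges
      set x : ℝ := ((U.filter fun u => mk u = q).card : ℝ) with hxdef
      set E : ℕ := (U.filter fun u => mk u = q ∧ G.m (Fin.last d) u ∈ U).card with hE
      set n : ℕ := (U.filter fun u => mk u = q ∧ G.m (Fin.last d) u ∉ U).card with hn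
      have hEn : E + n = (U.filter fun u => mk u = q).card := by
        rw [hE, hn]
        have := Finset.card_filter_add_card_filter_not
          (s := U.filter fun u => mk u = q) (p := fun u => G.m (Fin.last d) u ∈ U)
        rw [Finset.filter_filter, Finset.filter_filter] at this
        exact this
      have hx1 : (1:ℝ) ≤ x := by
        rw [hxdef]
        have : v ∈ U.filter fun u => mk u = q := Finset.mem_filter.mpr ⟨hvU, hvq⟩
        exact_mod_cast Finset.card_pos.mpr ⟨v, this⟩
      have hxs : x ≤ (U.card : ℝ) := by
        rw [hxdef]
        exact_mod_cast Finset.card_le_card (Finset.filter_subset _ _)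
      have hE1 : (E : ℝ) ≤ x := by
        rw [hE, hxdef]
        exact_mod_cast Finset.card_le_card
          (Finset.monotone_filter_right U
            (fun u _ (hh : mk u = q ∧ G.m (Fin.last d) u ∈ U) => hh.1))
      have hE2 : (E : ℝ) ≤ (U.card : ℝ) - x := by
        have hsub : (U.filter fun u => mk u = q) ⊆ U := Finset.filter_subset _ _
        have hinj : E ≤ (U \ (U.filter fun u => mk u = q)).card := by
          rw [hE]
          apply Finset.card_le_card_of_injOn (fun u => G.m (Fin.last d) u)
          · intro u hu
            simp only [Finset.coe_filter, Set.mem_setOf_eq] at hu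
            rw [Finset.mem_coe, Finset.mem_sdiff]
            refine ⟨hu.2.2, fun hmem => ?_⟩
            rw [Finset.mem_filter] at hmem
            exact hTop u ((hmkeq u _).mp (hu.2.1.trans hmem.2.symm))
          · intro a _ b _ h
            have h2 := congrArg (G.m (Fin.last d)) h
            rwa [G.invol, G.invol] at h2
        have hcard : ((U \ (U.filter fun u => mk u = q)).card : ℝ) = (U.card : ℝ) - x := by
          rw [hxdef, Finset.card_sdiff_of_subset hsub]
          exact_mod_cast Nat.cast_sub (Finset.card_le_card hsub)
        calc (E : ℝ) ≤ ((U \ (U.filter fun u => mk u = q)).card : ℝ) := by exact_mod_cast hinj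
          _ = (U.card : ℝ) - x := hcard
      have hkey : (E : ℝ) ≤ x * (Real.logb 2 (U.card : ℝ) - Real.logb 2 x) :=
        wpc_key (by linarith) hxs hE1 hE2
      have hEnR : (E : ℝ) + (n : ℝ) = x := by
        rw [hxdef]; exact_mod_cast hEn
      have hexpand : x * ((d : ℝ) + 1 - Real.logb 2 (U.card : ℝ)) =
          x * ((d : ℝ) - Real.logb 2 x) + x - x * (Real.logb 2 (U.card : ℝ) - Real.logb 2 x) := by
        ring
      push_cast at hIH ⊢
      rw [hexpand]
      linarith [hIH]
    -- assemble
    rw [hdecomp]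
    refine le_trans (le_of_eq ?_) (le_trans (Finset.sum_le_sum hmain) (le_of_eq ?_))
    · rw [← Finset.sum_mul]
      congr 1
      · exact_mod_cast hsum
      · push_cast; ring
    · rw [Nat.cast_sum]

/-- For every `d`-dimensional weak pseudo-cube `G` and every nonempty vertex
set `U` of size `s`, the edge expansion satisfies `∂(U)/|U| ≥ d - log₂ s`. -/
theorem weakPseudoCube_isoperimetry {V : Type} [Fintype V] [DecidableEq V] {d : ℕ}
    (G : EdgeColoredGraph V d) (hG : G.IsWeakPseudoCube) (U : Finset V) (hU : U.Nonempty) :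
    (G.boundary U : ℝ) / U.card ≥ d - Real.logb 2 U.card := by
  have h := wpc_main_bound d V G hG U hU
  have hc : (0:ℝ) < (U.card : ℝ) := by exact_mod_cast hU.card_pos
  rw [ge_iff_le, le_div_iff₀ hc]
  calc ((d:ℝ) - Real.logb 2 U.card) * U.card = (U.card : ℝ) * ((d:ℝ) - Real.logb 2 U.card) := by ring
    _ ≤ (G.boundary U : ℝ) := h
end

section
/- The number of vertices of a d-dimensional weakly dual systolic graph is at least n^(d), where n^(1) = 2 and n^(d) = n^(d−1)·(n^(d−1)+1) for d > 1. -/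
/-- The sequence `n⁽¹⁾ = 2`, `n⁽ᵈ⁾ = n⁽ᵈ⁻¹⁾·(n⁽ᵈ⁻¹⁾ + 1)` counting the
vertices of the `d`-dimensional clique product. -/
def nseq : ℕ → ℕ
  | 0 => 1
  | 1 => 2
  | d + 2 => nseq (d + 1) * (nseq (d + 1) + 1)

private lemma reach_symm {V : Type} {d : ℕ} (G : EdgeColoredGraph V d) (S : Set (Fin d)) :
    Symmetric (G.ReachIn S) :=
  haveI : Std.Symm (fun a b => ∃ i ∈ S, G.m i a = b) :=
    ⟨fun a b ⟨i, hi, h⟩ => ⟨i, hi, by rw [← h, G.invol]⟩⟩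
  fun _ _ h => Relation.ReflTransGen.stdSymm.symm _ _ h

private lemma wds_aux : ∀ (d : ℕ) {V : Type} [Fintype V] [Nonempty V],
    1 ≤ d → ∀ (G : EdgeColoredGraph V d), G.IsWeaklyDualSystolic →
    nseq d ≤ Fintype.card V := by
  intro d
  induction d with
  | zero => intro V _ _ hd; omega
  | succ k ih =>
    intro V _ _ _ G hG
    classical
    obtain ⟨hpc, hsimple, hcomp⟩ := hG
    have hpc' := hpc.1
    rcases Nat.eq_zero_or_pos k with rfl | hk
    · obtain ⟨v⟩ := ‹Nonempty V›
      have h2 : 1 < Fintype.card V :=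
        Fintype.one_lt_card_iff.mpr ⟨_, _, G.ne (Fin.last 0) v⟩
      exact h2
    obtain ⟨j, rfl⟩ : ∃ j, k = j + 1 := ⟨k - 1, by omega⟩
    set R := G.ReachIn {i | i ≠ Fin.last (j + 1)} with hR
    have hsym : Symmetric R := reach_symm G _
    let s : Setoid V := ⟨R, ⟨fun _ => .refl, fun h => hsym h, fun h h' => h.trans h'⟩⟩
    haveI : ∀ w : V, Finite (G.comp w) :=
      fun w => inferInstanceAs (Finite {u : V // R w u})
    haveI cfin : ∀ w : V, Fintype (G.comp w) := fun w => Fintype.ofFinite _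
    haveI : ∀ w : V, Nonempty (G.comp w) := fun w => ⟨⟨w, .refl⟩⟩
    haveI : Fintype (Quotient s) := Fintype.ofFinite _
    have hclass : ∀ w : V, nseq (j + 1) ≤ Fintype.card (G.comp w) := fun w =>
      ih (by omega) (G.restrict w) (hcomp w)
    -- each fiber of the quotient map has size ≥ nseq (j+1)
    have key : ∀ q : Quotient s,
        nseq (j + 1) ≤ (Finset.univ.filter fun u : V => Quotient.mk s u = q).card := by
      intro q
      obtain ⟨w, rfl⟩ := q.exists_rep
      calc nseq (j + 1) ≤ Fintype.card (G.comp w) := hclass w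
        _ = (Finset.univ.filter fun u : V => Quotient.mk s u = Quotient.mk s w).card := by
            rw [← Fintype.card_subtype]
            refine Fintype.card_congr (Equiv.subtypeEquivRight fun u => ?_)
            constructor
            · intro h; exact Quotient.eq.mpr (hsym h)
            · intro h; exact hsym (Quotient.eq.mp h)
    have hsum : Fintype.card (Quotient s) * nseq (j + 1) ≤ Fintype.card V := by
      have hdecomp : Fintype.card V =
          ∑ q : Quotient s, (Finset.univ.filter fun u : V => Quotient.mk s u = q).card := by
        rw [← Finset.card_univ,
          Finset.card_eq_sum_card_fiberwise (f := fun u : V => Quotient.mk s u)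
            (t := Finset.univ) (fun x _ => Finset.mem_univ _)]
      rw [hdecomp]
      calc Fintype.card (Quotient s) * nseq (j + 1)
          = ∑ _q : Quotient s, nseq (j + 1) := by
            rw [Finset.sum_const, Finset.card_univ, smul_eq_mul]
        _ ≤ _ := Finset.sum_le_sum fun q _ => key q
    -- count the classes
    obtain ⟨v₀⟩ := ‹Nonempty V›
    let F : Option (G.comp v₀) → Quotient s := fun o =>
      o.elim (Quotient.mk s v₀) fun u => Quotient.mk s (G.m (Fin.last (j + 1)) u.1)
    have hFinj : Function.Injective F := by
      rintro (_ | u) (_ | u') h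
      · rfl
      · exfalso
        have hr : R v₀ (G.m (Fin.last (j + 1)) u'.1) := Quotient.eq.mp h
        exact hpc' u'.1 ((hsym u'.2).trans hr)
      · exfalso
        have hr : R v₀ (G.m (Fin.last (j + 1)) u.1) := Quotient.eq.mp h.symm
        exact hpc' u.1 ((hsym u.2).trans hr)
      · have hr : R (G.m (Fin.last (j + 1)) u.1) (G.m (Fin.last (j + 1)) u'.1) :=
          Quotient.eq.mp h
        have huu' : R u.1 u'.1 := (hsym u.2).trans u'.2
        exact congrArg some (Subtype.ext (hsimple u.1 u'.1 huu' hr))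
    have hnum' : nseq (j + 1) + 1 ≤ Fintype.card (Quotient s) := by
      have h1 := Fintype.card_le_of_injective F hFinj
      rw [Fintype.card_option] at h1
      have h2 := hclass v₀
      omega
    calc nseq (j + 2) = nseq (j + 1) * (nseq (j + 1) + 1) := rfl
      _ ≤ nseq (j + 1) * Fintype.card (Quotient s) :=
          Nat.mul_le_mul_left _ hnum'
      _ = Fintype.card (Quotient s) * nseq (j + 1) := Nat.mul_comm _ _
      _ ≤ Fintype.card V := hsum

/-- The number of vertices of a (nonempty) `d`-dimensional weakly dual
systolic graph is at least `n⁽ᵈ⁾`, where `n⁽¹⁾ = 2` and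
`n⁽ᵈ⁾ = n⁽ᵈ⁻¹⁾(n⁽ᵈ⁻¹⁾ + 1)` for `d > 1`. -/
theorem weaklyDualSystolic_size {V : Type} [Fintype V] [Nonempty V] {d : ℕ}
    (hd : 1 ≤ d) (G : EdgeColoredGraph V d) (hG : G.IsWeaklyDualSystolic) :
    nseq d ≤ Fintype.card V :=
  wds_aux d hd G hG
end

section
/- Let G be a d-dimensional weakly dual systolic graph, U a set of s > 1 vertices. Then φ_G(U) ≥ d − 8(1 + log₂ log₂ s). -/
open Real in
private lemma wds_one_le_logb_two {s : ℝ} (hs : 2 ≤ s) : 1 ≤ logb 2 s := by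
  have h2 : (1:ℝ) < 2 := one_lt_two
  have := Real.logb_le_logb_of_le h2 (by norm_num) hs
  simpa [Real.logb_self_eq_one] using this

open Real in
private lemma wds_ll_nonneg {s : ℝ} (hs : 2 ≤ s) : 0 ≤ logb 2 (logb 2 s) :=
  Real.logb_nonneg one_lt_two (wds_one_le_logb_two hs)

open Real in
private lemma wds_ll_mono {a s : ℝ} (ha : 2 ≤ a) (has : a ≤ s) :
    logb 2 (logb 2 a) ≤ logb 2 (logb 2 s) := by
  have h1 : (0:ℝ) < logb 2 a := lt_of_lt_of_le one_pos (wds_one_le_logb_two ha)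
  exact Real.logb_le_logb_of_le one_lt_two h1
    (Real.logb_le_logb_of_le one_lt_two (by linarith) has)

open Real in
private lemma wds_small_gap {a s : ℝ} (ha : 2 ≤ a) (h : a ^ 2 ≤ s) :
    1 ≤ logb 2 (logb 2 s) - logb 2 (logb 2 a) := by
  have h1 : (1:ℝ) ≤ logb 2 a := wds_one_le_logb_two ha
  have h2 : 2 * logb 2 a ≤ logb 2 s := by
    have := Real.logb_le_logb_of_le one_lt_two (by positivity : (0:ℝ) < a ^ 2) h
    simpa [Real.logb_pow] using this
  have h3 : logb 2 (2 * logb 2 a) ≤ logb 2 (logb 2 s) :=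
    Real.logb_le_logb_of_le one_lt_two (by linarith) h2
  have h4 : logb 2 (2 * logb 2 a) = 1 + logb 2 (logb 2 a) := by
    rw [Real.logb_mul (by norm_num) (by linarith), Real.logb_self_eq_one] <;> norm_num
  linarith

open Real in
private lemma wds_gap_ge {a s : ℝ} (ha : 2 ≤ a) (has : a ≤ s) :
    (logb 2 s - logb 2 a) / logb 2 s
      ≤ logb 2 (logb 2 s) - logb 2 (logb 2 a) := by
  have h1 : (1:ℝ) ≤ logb 2 a := wds_one_le_logb_two ha
  have h2 : logb 2 a ≤ logb 2 s := Real.logb_le_logb_of_le one_lt_two (by linarith) has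
  set ℓa := logb 2 a
  set ℓ := logb 2 s
  have hℓpos : (0:ℝ) < ℓ := by linarith
  have hlog : Real.log (ℓa / ℓ) ≤ ℓa / ℓ - 1 :=
    Real.log_le_sub_one_of_pos (by positivity)
  have hdiv : Real.log ℓa - Real.log ℓ = Real.log (ℓa / ℓ) :=
    (Real.log_div (by linarith) (by linarith)).symm
  have key : (ℓ - ℓa) / ℓ ≤ Real.log ℓ - Real.log ℓa := by
    have h5 : (ℓ - ℓa) / ℓ = 1 - ℓa / ℓ := by field_simp
    rw [h5]; linarith
  have hlog2 : (0:ℝ) < Real.log 2 := Real.log_pos one_lt_two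
  have hlog2le : Real.log 2 ≤ 1 := by
    have := Real.log_le_sub_one_of_pos (by norm_num : (0:ℝ) < 2); linarith
  have hmono : Real.log ℓa ≤ Real.log ℓ := Real.log_le_log (by linarith) h2
  have hfin : logb 2 ℓ - logb 2 ℓa = (Real.log ℓ - Real.log ℓa) / Real.log 2 := by
    simp only [Real.logb]; rw [sub_div]
  rw [hfin, le_div_iff₀ hlog2]
  nlinarith

open Real in
private lemma wds_logb_le_rpow {s : ℝ} (hs : 2 ≤ s) :
    logb 2 s ≤ 8 * s ^ ((1:ℝ)/4) := by
  have hsp : (0:ℝ) < s := by linarith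
  have h1 : Real.log (s ^ ((1:ℝ)/4)) ≤ s ^ ((1:ℝ)/4) - 1 :=
    Real.log_le_sub_one_of_pos (Real.rpow_pos_of_pos hsp _)
  have h2 : Real.log (s ^ ((1:ℝ)/4)) = (1/4) * Real.log s := Real.log_rpow hsp _
  have hlog2 : (1/2 : ℝ) ≤ Real.log 2 := by
    have := Real.log_two_gt_d9; linarith
  have hlogs : 0 ≤ Real.log s := Real.log_nonneg (by linarith)
  have hr : (0:ℝ) ≤ s ^ ((1:ℝ)/4) := (Real.rpow_pos_of_pos hsp _).le
  rw [Real.logb, div_le_iff₀ (by linarith : (0:ℝ) < Real.log 2)]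
  nlinarith

open Real in
private lemma wds_bigterm {s a B : ℝ} (hs : 2 ≤ s) (ha : 2 ≤ a) (hB0 : 0 ≤ B)
    (hB : B ≤ s ^ ((1:ℝ)/2)) (ha1 : s ^ ((1:ℝ)/2) ≤ a) (ha2 : 2 * a ≤ s) :
    B ≤ 8 * a * (logb 2 (logb 2 s) - logb 2 (logb 2 a)) := by
  have hsp : (0:ℝ) < s := by linarith
  have h1 : (1:ℝ) ≤ logb 2 a := wds_one_le_logb_two ha
  have hasle : a ≤ s := by linarith
  have h2 : logb 2 a ≤ logb 2 s := Real.logb_le_logb_of_le one_lt_two (by linarith) hasle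
  have hℓ1 : (1:ℝ) ≤ logb 2 s := wds_one_le_logb_two hs
  have hgap : (logb 2 s - logb 2 a) / logb 2 s
      ≤ logb 2 (logb 2 s) - logb 2 (logb 2 a) := wds_gap_ge ha hasle
  set ℓa := logb 2 a
  set ℓ := logb 2 s
  have hℓpos : (0:ℝ) < ℓ := by linarith
  have key : B ≤ 8 * a * ((ℓ - ℓa) / ℓ) := by
    have hhalf : (0:ℝ) < s ^ ((1:ℝ)/2) := Real.rpow_pos_of_pos hsp _
    rcases le_total a (s ^ ((3:ℝ)/4)) with hcase | hcase
    · have h3 : ℓa ≤ (3/4) * ℓ := by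
        have := Real.logb_le_logb_of_le one_lt_two (by linarith) hcase
        rwa [Real.logb_rpow_eq_mul_logb_of_pos hsp] at this
      have h4 : 8 * (s ^ ((1:ℝ)/2) * (ℓ/4)) ≤ 8 * (a * (ℓ - ℓa)) := by
        have hq : ℓ/4 ≤ ℓ - ℓa := by linarith
        nlinarith
      calc B ≤ s ^ ((1:ℝ)/2) := hB
        _ ≤ 2 * s ^ ((1:ℝ)/2) := by linarith
        _ = 8 * (s ^ ((1:ℝ)/2) * (ℓ/4)) / ℓ := by field_simp; ring
        _ ≤ 8 * (a * (ℓ - ℓa)) / ℓ := div_le_div_of_nonneg_right h4 hℓpos.le |>.trans_eq rfl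
        _ = 8 * a * ((ℓ - ℓa) / ℓ) := by ring
    · have h3 : ℓa ≤ ℓ - 1 := by
        have hle : a ≤ s / 2 := by linarith
        have h6 := Real.logb_le_logb_of_le one_lt_two (by linarith) hle
        have hdiv : logb 2 (s/2) = ℓ - 1 := by
          rw [Real.logb_div (by linarith) (by norm_num), Real.logb_self_eq_one] <;> norm_num
        rw [hdiv] at h6; exact h6
      have hℓle : ℓ ≤ 8 * s ^ ((1:ℝ)/4) := wds_logb_le_rpow hs
      have h34 : s ^ ((3:ℝ)/4) = s ^ ((1:ℝ)/2) * s ^ ((1:ℝ)/4) := by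
        rw [← Real.rpow_add hsp]; norm_num
      have hBl : B * ℓ ≤ 8 * s ^ ((3:ℝ)/4) := by
        have h14 : (0:ℝ) < s ^ ((1:ℝ)/4) := Real.rpow_pos_of_pos hsp _
        have := mul_le_mul hB hℓle (by linarith) hhalf.le
        rw [h34]; nlinarith
      have hstep : B ≤ 8 * s ^ ((3:ℝ)/4) / ℓ := by
        rw [le_div_iff₀ hℓpos]; linarith
      calc B ≤ 8 * s ^ ((3:ℝ)/4) / ℓ := hstep
        _ ≤ 8 * (a * (ℓ - ℓa)) / ℓ := by
            apply div_le_div_of_nonneg_right ?_ hℓpos.le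
            nlinarith [Real.rpow_pos_of_pos hsp ((3:ℝ)/4)]
        _ = 8 * a * ((ℓ - ℓa) / ℓ) := by ring
  calc B ≤ 8 * a * ((ℓ - ℓa) / ℓ) := key
    _ ≤ 8 * a * (logb 2 (logb 2 s) - logb 2 (logb 2 a)) := by
        apply mul_le_mul_of_nonneg_left hgap (by linarith)

private lemma wds_sqrt_le_of_sq {x y : ℝ} (hx : 0 ≤ x) (hy : 0 ≤ y) (h : x ≤ y ^ 2) :
    x ^ ((1:ℝ)/2) ≤ y := by
  have h1 : x ^ ((1:ℝ)/2) ≤ (y ^ 2) ^ ((1:ℝ)/2) :=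
    Real.rpow_le_rpow hx h (by norm_num)
  have h2 : (y ^ 2) ^ ((1:ℝ)/2) = y := by
    rw [← Real.rpow_natCast y 2, ← Real.rpow_mul hy]
    norm_num
  linarith

namespace EdgeColoredGraph

private lemma reach_symm {V : Type} {d : ℕ} (G : EdgeColoredGraph V d) (S : Set (Fin d)) :
    Symmetric (G.ReachIn S) := by
  have hs : Std.Symm (fun a b : V => ∃ i ∈ S, G.m i a = b) := ⟨by
    rintro a b ⟨i, hi, rfl⟩
    exact ⟨i, hi, G.invol i a⟩⟩
  exact fun a b h =>
    (Relation.ReflTransGen.symmetric (r := fun a b : V => ∃ i ∈ S, G.m i a = b)).symm a b h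

private lemma reach_equiv {V : Type} {d : ℕ} (G : EdgeColoredGraph V d) (S : Set (Fin d)) :
    Equivalence (G.ReachIn S) :=
  ⟨fun _ => Relation.ReflTransGen.refl, fun h => reach_symm G S h,
    fun h h' => Relation.ReflTransGen.trans h h'⟩

private lemma boundary_singleton {V : Type} [Fintype V] [DecidableEq V] {d : ℕ}
    (G : EdgeColoredGraph V d) (u : V) : G.boundary {u} = d := by
  unfold boundary
  have h : ∀ i : Fin d, (({u} : Finset V).filter fun v => G.m i v ∉ ({u} : Finset V)).card = 1 := by
    intro i
    rw [Finset.filter_singleton, if_pos (by simp [G.ne i u])]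
    simp
  rw [Finset.sum_congr rfl (fun i _ => h i), Finset.sum_const, smul_eq_mul, mul_one,
    Finset.card_univ, Fintype.card_fin]

end EdgeColoredGraph

private theorem wds_key : ∀ (d : ℕ) (V : Type) [Fintype V] [DecidableEq V]
    (G : EdgeColoredGraph V d), G.IsWeaklyDualSystolic → ∀ U : Finset V, 2 ≤ U.card →
    (U.card : ℝ) * ((d : ℝ) - 8 * (1 + Real.logb 2 (Real.logb 2 (U.card : ℝ))))
      ≤ (G.boundary U : ℝ) := by
  intro d
  induction d with
  | zero =>
    intro V _ _ G _ U hU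
    have h1 : (2:ℝ) ≤ (U.card : ℝ) := by exact_mod_cast hU
    have h2 := wds_ll_nonneg h1
    have h3 : (0:ℝ) ≤ (G.boundary U : ℝ) := Nat.cast_nonneg _
    push_cast
    nlinarith
  | succ d IH =>

    intro V instV1 instV2 G hG U hU
    classical
    have hpc : ∀ w, ¬ G.ReachIn {i | i ≠ Fin.last d} w (G.m (Fin.last d) w) := hG.1.1
    have hsimp : ∀ a b, G.ReachIn {i | i ≠ Fin.last d} a b →
        G.ReachIn {i | i ≠ Fin.last d} (G.m (Fin.last d) a) (G.m (Fin.last d) b) → a = b :=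
      hG.2.1
    have hrec : ∀ w, (G.restrict w).IsWeaklyDualSystolic := hG.2.2
    let st : Setoid V := ⟨G.ReachIn {i | i ≠ Fin.last d},
      EdgeColoredGraph.reach_equiv G {i | i ≠ Fin.last d}⟩
    letI : Fintype (Quotient st) := Quotient.fintype st
    let f : V → Quotient st := Quotient.mk st
    have hf_iff : ∀ a b : V, f a = f b ↔ G.ReachIn {i | i ≠ Fin.last d} a b :=
      fun a b => ⟨fun h => Quotient.exact h, fun h => Quotient.sound h⟩
    let C : Finset (Quotient st) := U.image f
    let sq : Quotient st → ℕ := fun q => (U.filter fun v => f v = q).card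
    let n : Fin d → Quotient st → ℕ :=
      fun i q => (U.filter fun v => G.m (Fin.castSucc i) v ∉ U ∧ f v = q).card
    let mq : Quotient st → ℕ :=
      fun q => (U.filter fun v => G.m (Fin.last d) v ∈ U ∧ f v = q).card
    -- fiberwise decomposition of a filtered count
    have hfib : ∀ (p : V → Prop) (inst : DecidablePred p), (U.filter p).card
        = ∑ q ∈ C, (U.filter fun v => p v ∧ f v = q).card := by
      intro p inst
      rw [Finset.card_eq_sum_card_fiberwise
        (f := f) (t := C) (fun v hv => Finset.mem_image_of_mem f (Finset.mem_filter.mp hv).1)]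
      apply Finset.sum_congr rfl
      intro q _
      rw [Finset.filter_filter]
    -- total size decomposition
    have hssum : ∑ q ∈ C, sq q = U.card := by
      exact (Finset.card_eq_sum_card_fiberwise
        (f := f) (t := C) (fun v hv => Finset.mem_image_of_mem f hv)).symm
    have hsq1 : ∀ q ∈ C, 1 ≤ sq q := by
      intro q hq
      obtain ⟨v, hv, rfl⟩ := Finset.mem_image.mp hq
      have : v ∈ U.filter fun w => f w = f v := Finset.mem_filter.mpr ⟨hv, rfl⟩
      exact Finset.card_pos.mpr ⟨v, this⟩
    have hsq_le : ∀ q, sq q ≤ U.card := fun q => Finset.card_filter_le _ _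
    have hmq_le : ∀ q, mq q ≤ sq q := by
      intro q
      apply Finset.card_le_card
      intro v hv
      obtain ⟨h1, _, h3⟩ := Finset.mem_filter.mp hv
      exact Finset.mem_filter.mpr ⟨h1, h3⟩
    -- main combinatorial boundary identity
    have hkey : G.boundary U + ∑ q ∈ C, mq q
        = (∑ q ∈ C, ∑ i : Fin d, n i q) + U.card := by
      have hb : G.boundary U
          = (∑ i : Fin d, (U.filter fun v => G.m (Fin.castSucc i) v ∉ U).card)
            + (U.filter fun v => G.m (Fin.last d) v ∉ U).card := by
        unfold EdgeColoredGraph.boundary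
        rw [Fin.sum_univ_castSucc]
      have h2 : ∀ i : Fin d, (U.filter fun v => G.m (Fin.castSucc i) v ∉ U).card
          = ∑ q ∈ C, n i q := fun i => hfib _ (fun v => inferInstance)
      have h4 : (U.filter fun v => G.m (Fin.last d) v ∈ U).card = ∑ q ∈ C, mq q :=
        hfib _ (fun v => inferInstance)
      have h3 := Finset.card_filter_add_card_filter_not
        (s := U) (p := fun v => G.m (Fin.last d) v ∈ U)
      rw [hb, Finset.sum_congr rfl (fun i _ => h2 i), Finset.sum_comm, ← h4]
      omega

    -- per-component boundary lower bound via the induction hypothesis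
    have hql : ∀ q ∈ C,
        (if 2 ≤ sq q then (sq q : ℝ)
            * ((d : ℝ) - 8 * (1 + Real.logb 2 (Real.logb 2 ((sq q : ℕ) : ℝ))))
          else (d : ℝ))
        ≤ ((∑ i : Fin d, n i q : ℕ) : ℝ) := by
      intro q hq
      obtain ⟨v, hv, rfl⟩ := Finset.mem_image.mp hq
      letI : DecidablePred (fun u => G.ReachIn {i | i ≠ Fin.last d} v u) :=
        fun u => Classical.propDecidable _
      letI instF : Fintype (G.comp v) := Subtype.fintype _
      letI instD : DecidableEq (G.comp v) := Subtype.instDecidableEq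
      set A : Finset (G.comp v) := Finset.univ.filter (fun u => u.1 ∈ U) with hA
      have hAcard : A.card = sq (f v) := by
        apply Finset.card_bij (fun a _ => a.1)
        · rintro ⟨a, ha⟩ hmem
          simp only [hA, Finset.mem_filter, Finset.mem_univ, true_and] at hmem ⊢
          exact ⟨(Finset.mem_filter.mp hmem).2, ((hf_iff v a).mpr ha).symm⟩
        · rintro ⟨a, ha⟩ hma ⟨b, hb⟩ hmb h
          exact Subtype.ext h
        · intro w hw
          simp only [Finset.mem_filter] at hw
          exact ⟨⟨w, (hf_iff v w).mp hw.2.symm⟩, Finset.mem_filter.mpr ⟨Finset.mem_univ _, hw.1⟩, rfl⟩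
      have hAbound : (G.restrict v).boundary A = ∑ i : Fin d, n i (f v) := by
        unfold EdgeColoredGraph.boundary
        apply Finset.sum_congr rfl
        intro i _
        apply Finset.card_bij (fun a _ => a.1)
        · rintro ⟨a, ha⟩ hmem
          simp only [hA, Finset.mem_filter, Finset.mem_univ, true_and] at hmem ⊢
          exact ⟨(Finset.mem_filter.mp (Finset.mem_filter.mp hmem).1).2, (Finset.mem_filter.mp hmem).2, ((hf_iff v a).mpr ha).symm⟩
        · rintro ⟨a, ha⟩ hma ⟨b, hb⟩ hmb h
          exact Subtype.ext h
        · intro w hw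
          simp only [Finset.mem_filter] at hw
          have hre : G.ReachIn {i | i ≠ Fin.last d} v w := (hf_iff v w).mp hw.2.2.symm
          refine ⟨⟨w, hre⟩, ?_, rfl⟩
          simp only [hA, Finset.mem_filter, Finset.mem_univ, true_and]
          exact Finset.mem_filter.mpr ⟨Finset.mem_filter.mpr ⟨Finset.mem_univ _, hw.1⟩, fun hcon => hw.2.1 hcon⟩
      by_cases hbig : 2 ≤ sq (f v)
      · rw [if_pos hbig]
        have := IH (G.comp v) (G.restrict v) (hrec v) A (by rw [hAcard]; exact hbig)
        rw [hAcard, hAbound] at this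
        exact this
      · rw [if_neg hbig]
        have h1 : sq (f v) = 1 := le_antisymm (by omega) (hsq1 _ hq)
        have h2 : A.card = 1 := by rw [hAcard, h1]
        obtain ⟨u, hu⟩ := Finset.card_eq_one.mp h2
        have h3 : (G.restrict v).boundary A = d := by
          rw [hu]; exact EdgeColoredGraph.boundary_singleton _ u
        rw [← hAbound, h3]

    -- sums of matched counts over a part of the components
    have hWsum : ∀ (P : Quotient st → Prop) (inst : DecidablePred P),
        ∑ q ∈ C.filter P, mq q
          = (U.filter fun v => (G.m (Fin.last d) v ∈ U ∧ P (f v))).card := by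
      intro P inst
      rw [Finset.card_eq_sum_card_fiberwise (f := f) (t := C.filter P)
        (fun v hv => by
          exact Finset.mem_filter.mpr ⟨Finset.mem_image_of_mem f (Finset.mem_filter.mp hv).1,
            (Finset.mem_filter.mp hv).2.2⟩)]
      apply Finset.sum_congr rfl
      intro q hq
      simp only [Finset.mem_filter] at hq
      rw [Finset.filter_filter]
      show (U.filter fun v => G.m (Fin.last d) v ∈ U ∧ f v = q).card = _
      congr 1
      apply Finset.filter_congr
      intro v _
      constructor
      · rintro ⟨h1, h3⟩; exact ⟨⟨h1, h3 ▸ hq.2⟩, h3⟩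
      · rintro ⟨⟨h1, _⟩, h3⟩; exact ⟨h1, h3⟩
    -- the key counting inequality using simplicity of the contracted graph
    have hC5 : ∑ q ∈ C.filter (fun q => U.card < sq q * sq q), mq q
        ≤ (C.filter (fun q => U.card < sq q * sq q)).card
            * (C.filter (fun q => U.card < sq q * sq q)).card
          - (C.filter (fun q => U.card < sq q * sq q)).card
        + ∑ q ∈ C.filter (fun q => ¬ U.card < sq q * sq q), mq q := by
      have hB1 : ((U.filter fun v => G.m (Fin.last d) v ∈ U ∧ U.card < sq (f v) * sq (f v)).filter
            (fun v => U.card < sq (f (G.m (Fin.last d) v)) * sq (f (G.m (Fin.last d) v)))).card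
          ≤ (C.filter (fun q => U.card < sq q * sq q)).card
            * (C.filter (fun q => U.card < sq q * sq q)).card
          - (C.filter (fun q => U.card < sq q * sq q)).card := by
        have hcard : (((C.filter (fun q => U.card < sq q * sq q))
              ×ˢ (C.filter (fun q => U.card < sq q * sq q))).filter
                (fun p => ¬ p.1 = p.2)).card
            = (C.filter (fun q => U.card < sq q * sq q)).card
              * (C.filter (fun q => U.card < sq q * sq q)).card
            - (C.filter (fun q => U.card < sq q * sq q)).card := by
          set B := C.filter (fun q => U.card < sq q * sq q) with hB
          have h1 := Finset.card_filter_add_card_filter_not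
            (s := B ×ˢ B) (p := fun p => p.1 = p.2)
          have h2 : ((B ×ˢ B).filter (fun p => p.1 = p.2)).card = B.card := by
            have heq : (B ×ˢ B).filter (fun p => p.1 = p.2) = B.image (fun q => (q, q)) := by
              ext ⟨p1, p2⟩
              simp only [Finset.mem_filter, Finset.mem_product, Finset.mem_image, Prod.mk.injEq]
              constructor
              · rintro ⟨⟨hp1, _⟩, rfl⟩; exact ⟨p1, hp1, rfl, rfl⟩
              · rintro ⟨q, hq, rfl, rfl⟩; exact ⟨⟨hq, hq⟩, rfl⟩
            rw [heq, Finset.card_image_of_injective _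
              (fun a b h => (Prod.mk.injEq _ _ _ _ ▸ h).1)]
          have h3 : (B ×ˢ B).card = B.card * B.card := Finset.card_product B B
          rw [h2, h3] at h1
          omega
        rw [← hcard]
        apply Finset.card_le_card_of_injOn (fun v => (f v, f (G.m (Fin.last d) v)))
        · intro v hv
          obtain ⟨hv1, hbig2⟩ := Finset.mem_filter.mp hv
          obtain ⟨hvU, hMvU, hbig⟩ := Finset.mem_filter.mp hv1
          refine Finset.mem_filter.mpr ⟨Finset.mem_product.mpr ⟨?_, ?_⟩, ?_⟩
          · exact Finset.mem_filter.mpr ⟨Finset.mem_image_of_mem f hvU, hbig⟩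
          · exact Finset.mem_filter.mpr ⟨Finset.mem_image_of_mem f hMvU, hbig2⟩
          · intro hcon
            exact hpc v ((hf_iff v (G.m (Fin.last d) v)).mp hcon)
        · intro a ha b hb hab
          simp only [Prod.mk.injEq] at hab
          exact hsimp a b ((hf_iff a b).mp hab.1)
            ((hf_iff (G.m (Fin.last d) a) (G.m (Fin.last d) b)).mp hab.2)
      have hB2 : ((U.filter fun v => G.m (Fin.last d) v ∈ U ∧ U.card < sq (f v) * sq (f v)).filter
            (fun v => ¬ U.card < sq (f (G.m (Fin.last d) v)) * sq (f (G.m (Fin.last d) v)))).card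
          ≤ (U.filter fun v => G.m (Fin.last d) v ∈ U
              ∧ ¬ U.card < sq (f v) * sq (f v)).card := by
        apply Finset.card_le_card_of_injOn (fun v => G.m (Fin.last d) v)
        · intro v hv
          obtain ⟨hv1, hsmall⟩ := Finset.mem_filter.mp hv
          obtain ⟨hvU, hMvU, _⟩ := Finset.mem_filter.mp hv1
          exact Finset.mem_filter.mpr ⟨hMvU, by rw [G.invol]; exact hvU, hsmall⟩
        · intro a ha b hb hab
          have h := congrArg (fun w => G.m (Fin.last d) w) hab
          simp only [G.invol] at h
          exact h
      rw [hWsum _ (fun q => inferInstance), hWsum _ (fun q => inferInstance),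
        ← Finset.card_filter_add_card_filter_not
          (s := U.filter fun v => G.m (Fin.last d) v ∈ U ∧ U.card < sq (f v) * sq (f v))
          (p := fun v => U.card < sq (f (G.m (Fin.last d) v)) * sq (f (G.m (Fin.last d) v)))]
      exact Nat.add_le_add hB1 hB2

    have hs2 : (2:ℝ) ≤ (U.card : ℝ) := by exact_mod_cast hU
    have hllU : 0 ≤ Real.logb 2 (Real.logb 2 (U.card : ℝ)) := wds_ll_nonneg hs2
    have hbig_sq2 : ∀ q ∈ C.filter (fun q => U.card < sq q * sq q), 2 ≤ sq q := by
      intro q hq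
      obtain ⟨-, hb⟩ := Finset.mem_filter.mp hq
      by_contra hcon
      push_neg at hcon
      have h1 : sq q ≤ 1 := by omega
      have := Nat.mul_le_mul h1 h1
      omega
    have hbig_half : ∀ q ∈ C.filter (fun q => U.card < sq q * sq q),
        (U.card : ℝ) ^ ((1:ℝ)/2) ≤ (sq q : ℝ) := by
      intro q hq
      obtain ⟨-, hb⟩ := Finset.mem_filter.mp hq
      apply wds_sqrt_le_of_sq (Nat.cast_nonneg _) (Nat.cast_nonneg _)
      have : (U.card : ℝ) ≤ (sq q : ℝ) * (sq q : ℝ) := by exact_mod_cast hb.le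
      nlinarith
    have hssumR : ∑ q ∈ C, (sq q : ℝ) = (U.card : ℝ) := by exact_mod_cast hssum
    have hBbound : ((C.filter (fun q => U.card < sq q * sq q)).card : ℝ)
        ≤ (U.card : ℝ) ^ ((1:ℝ)/2) := by
      have hsum1 : ∑ _q ∈ C.filter (fun q => U.card < sq q * sq q), (U.card : ℝ) ^ ((1:ℝ)/2)
          ≤ ∑ q ∈ C.filter (fun q => U.card < sq q * sq q), (sq q : ℝ) :=
        Finset.sum_le_sum hbig_half
      have hsum2 : ∑ q ∈ C.filter (fun q => U.card < sq q * sq q), (sq q : ℝ)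
          ≤ ∑ q ∈ C, (sq q : ℝ) :=
        Finset.sum_le_sum_of_subset_of_nonneg (Finset.filter_subset _ _)
          (fun q _ _ => Nat.cast_nonneg _)
      rw [Finset.sum_const, nsmul_eq_mul] at hsum1
      have hU0 : (0:ℝ) < (U.card : ℝ) := by linarith
      have hhalfpos : (0:ℝ) < (U.card : ℝ) ^ ((1:ℝ)/2) := Real.rpow_pos_of_pos hU0 _
      have hfact : (U.card : ℝ) = (U.card : ℝ) ^ ((1:ℝ)/2) * (U.card : ℝ) ^ ((1:ℝ)/2) := by
        rw [← Real.rpow_add hU0]; norm_num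
      have : ((C.filter (fun q => U.card < sq q * sq q)).card : ℝ) * (U.card : ℝ) ^ ((1:ℝ)/2)
          ≤ (U.card : ℝ) ^ ((1:ℝ)/2) * (U.card : ℝ) ^ ((1:ℝ)/2) := by
        rw [← hfact]; rw [hssumR] at hsum2; linarith
      exact le_of_mul_le_mul_right this hhalfpos
    have hBIG : (((C.filter (fun q => U.card < sq q * sq q)).card
            * (C.filter (fun q => U.card < sq q * sq q)).card
          - (C.filter (fun q => U.card < sq q * sq q)).card : ℕ) : ℝ)
        ≤ ∑ q ∈ C.filter (fun q => U.card < sq q * sq q),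
            8 * (sq q : ℝ) * (Real.logb 2 (Real.logb 2 (U.card : ℝ))
              - Real.logb 2 (Real.logb 2 (sq q : ℝ))) := by
      have hterm_nonneg : ∀ q ∈ C.filter (fun q => U.card < sq q * sq q),
          0 ≤ 8 * (sq q : ℝ) * (Real.logb 2 (Real.logb 2 (U.card : ℝ))
              - Real.logb 2 (Real.logb 2 (sq q : ℝ))) := by
        intro q hq
        have h2q : (2:ℝ) ≤ (sq q : ℝ) := by exact_mod_cast hbig_sq2 q hq
        have hle : (sq q : ℝ) ≤ (U.card : ℝ) := by exact_mod_cast hsq_le q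
        have := wds_ll_mono h2q hle
        nlinarith
      by_cases hb1 : (C.filter (fun q => U.card < sq q * sq q)).card ≤ 1
      · have h0 : (C.filter (fun q => U.card < sq q * sq q)).card
            * (C.filter (fun q => U.card < sq q * sq q)).card
            - (C.filter (fun q => U.card < sq q * sq q)).card = 0 := by
          rcases Nat.le_one_iff_eq_zero_or_eq_one.mp hb1 with h | h <;> rw [h]
        rw [h0, Nat.cast_zero]
        exact Finset.sum_nonneg hterm_nonneg
      · push_neg at hb1
        have hne : (C.filter (fun q => U.card < sq q * sq q)).Nonempty :=
          Finset.card_pos.mp (by omega)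
        obtain ⟨qm, hqm, hqmax⟩ := Finset.exists_max_image
          (C.filter (fun q => U.card < sq q * sq q)) sq hne
        have hper : ∀ q ∈ (C.filter (fun q => U.card < sq q * sq q)).erase qm,
            (((C.filter (fun q => U.card < sq q * sq q)).card : ℕ) : ℝ)
              ≤ 8 * (sq q : ℝ) * (Real.logb 2 (Real.logb 2 (U.card : ℝ))
                - Real.logb 2 (Real.logb 2 (sq q : ℝ))) := by
          intro q hq'
          have hqB : q ∈ C.filter (fun q => U.card < sq q * sq q) :=
            Finset.mem_of_mem_erase hq'
          have hneq : q ≠ qm := Finset.ne_of_mem_erase hq'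
          have hpair : sq q + sq qm ≤ ∑ r ∈ C.filter (fun q => U.card < sq q * sq q), sq r := by
            rw [← Finset.sum_pair hneq]
            apply Finset.sum_le_sum_of_subset
            intro x hx
            rcases Finset.mem_insert.mp hx with rfl | hx'
            · exact hqB
            · rw [Finset.mem_singleton.mp hx']; exact hqm
          have hsub : ∑ r ∈ C.filter (fun q => U.card < sq q * sq q), sq r
              ≤ ∑ r ∈ C, sq r := Finset.sum_le_sum_of_subset (Finset.filter_subset _ _)
          have hmax : sq q ≤ sq qm := hqmax q hqB
          have h2aN : 2 * sq q ≤ U.card := by omega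
          have h2a : 2 * (sq q : ℝ) ≤ (U.card : ℝ) := by exact_mod_cast h2aN
          exact wds_bigterm hs2 (by exact_mod_cast hbig_sq2 q hqB) (Nat.cast_nonneg _)
            hBbound (hbig_half q hqB) h2a
        have hsplit := Finset.add_sum_erase _ (fun q =>
          8 * (sq q : ℝ) * (Real.logb 2 (Real.logb 2 (U.card : ℝ))
            - Real.logb 2 (Real.logb 2 (sq q : ℝ)))) hqm
        beta_reduce at hsplit
        have hsum_erase : ∑ _q ∈ (C.filter (fun q => U.card < sq q * sq q)).erase qm,
              (((C.filter (fun q => U.card < sq q * sq q)).card : ℕ) : ℝ)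
            ≤ ∑ q ∈ (C.filter (fun q => U.card < sq q * sq q)).erase qm,
              8 * (sq q : ℝ) * (Real.logb 2 (Real.logb 2 (U.card : ℝ))
                - Real.logb 2 (Real.logb 2 (sq q : ℝ))) := Finset.sum_le_sum hper
        rw [Finset.sum_const, nsmul_eq_mul, Finset.card_erase_of_mem hqm] at hsum_erase
        have hcast1 : (((C.filter (fun q => U.card < sq q * sq q)).card - 1 : ℕ) : ℝ)
            = ((C.filter (fun q => U.card < sq q * sq q)).card : ℝ) - 1 := by
          rw [Nat.cast_sub (by omega)]; norm_num
        have hcast2 : (((C.filter (fun q => U.card < sq q * sq q)).card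
              * (C.filter (fun q => U.card < sq q * sq q)).card
            - (C.filter (fun q => U.card < sq q * sq q)).card : ℕ) : ℝ)
            = ((C.filter (fun q => U.card < sq q * sq q)).card : ℝ)
                * ((C.filter (fun q => U.card < sq q * sq q)).card : ℝ)
              - ((C.filter (fun q => U.card < sq q * sq q)).card : ℝ) := by
          rw [Nat.cast_sub (Nat.le_mul_of_pos_left _ (by omega))]
          push_cast
          ring
        have hqm_nonneg := hterm_nonneg qm hqm
        rw [hcast1] at hsum_erase
        rw [hcast2]
        nlinarith

    -- pointwise bound on small components
    have hSS : ∀ q ∈ C.filter (fun q => ¬ U.card < sq q * sq q),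
        (sq q : ℝ) * ((d : ℝ) - 8 * (1 + Real.logb 2 (Real.logb 2 (U.card : ℝ))))
            + 2 * (mq q : ℝ)
          ≤ (if 2 ≤ sq q then (sq q : ℝ)
              * ((d : ℝ) - 8 * (1 + Real.logb 2 (Real.logb 2 ((sq q : ℕ) : ℝ))))
            else (d : ℝ)) := by
      intro q hq
      obtain ⟨hqC, hqsmall⟩ := Finset.mem_filter.mp hq
      have hmqR : (mq q : ℝ) ≤ (sq q : ℝ) := by exact_mod_cast hmq_le q
      by_cases h2q : 2 ≤ sq q
      · rw [if_pos h2q]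
        have h2qR : (2:ℝ) ≤ (sq q : ℝ) := by exact_mod_cast h2q
        have hsqs : ((sq q : ℝ)) ^ 2 ≤ (U.card : ℝ) := by
          push_neg at hqsmall
          have h7 : ((sq q * sq q : ℕ) : ℝ) ≤ (U.card : ℝ) := by exact_mod_cast hqsmall
          push_cast at h7
          nlinarith [h7]
        have hgap := wds_small_gap h2qR hsqs
        nlinarith
      · rw [if_neg h2q]
        have h1 : sq q = 1 := le_antisymm (by omega) (hsq1 q hqC)
        rw [h1]
        rw [h1] at hmqR
        push_cast at hmqR ⊢
        have hmq0 : (0:ℝ) ≤ (mq q : ℝ) := Nat.cast_nonneg _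
        linarith [hllU]
    -- final assembly
    have hcastkey : (G.boundary U : ℝ) + ∑ q ∈ C, (mq q : ℝ)
        = (∑ q ∈ C, ((∑ i : Fin d, n i q : ℕ) : ℝ)) + (U.card : ℝ) := by
      exact_mod_cast congrArg (fun k : ℕ => (k : ℝ)) hkey
    have hg1 : ∑ q ∈ C, (if 2 ≤ sq q then (sq q : ℝ)
            * ((d : ℝ) - 8 * (1 + Real.logb 2 (Real.logb 2 ((sq q : ℕ) : ℝ))))
          else (d : ℝ))
        ≤ ∑ q ∈ C, ((∑ i : Fin d, n i q : ℕ) : ℝ) := Finset.sum_le_sum hql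
    have hC5R : ∑ q ∈ C.filter (fun q => U.card < sq q * sq q), (mq q : ℝ)
        ≤ (((C.filter (fun q => U.card < sq q * sq q)).card
              * (C.filter (fun q => U.card < sq q * sq q)).card
            - (C.filter (fun q => U.card < sq q * sq q)).card : ℕ) : ℝ)
          + ∑ q ∈ C.filter (fun q => ¬ U.card < sq q * sq q), (mq q : ℝ) := by
      exact_mod_cast hC5
    have hBBgf : ∑ q ∈ C.filter (fun q => U.card < sq q * sq q),
          ((sq q : ℝ) * ((d : ℝ) - 8 * (1 + Real.logb 2 (Real.logb 2 (U.card : ℝ))))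
            + 8 * (sq q : ℝ) * (Real.logb 2 (Real.logb 2 (U.card : ℝ))
              - Real.logb 2 (Real.logb 2 (sq q : ℝ))))
        = ∑ q ∈ C.filter (fun q => U.card < sq q * sq q),
            (if 2 ≤ sq q then (sq q : ℝ)
                * ((d : ℝ) - 8 * (1 + Real.logb 2 (Real.logb 2 ((sq q : ℕ) : ℝ))))
              else (d : ℝ)) := by
      apply Finset.sum_congr rfl
      intro q hq
      rw [if_pos (hbig_sq2 q hq)]
      ring
    have hmain : ∑ q ∈ C, ((sq q : ℝ)
            * ((d : ℝ) - 8 * (1 + Real.logb 2 (Real.logb 2 (U.card : ℝ)))))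
          + ∑ q ∈ C, (mq q : ℝ)
        ≤ ∑ q ∈ C, (if 2 ≤ sq q then (sq q : ℝ)
              * ((d : ℝ) - 8 * (1 + Real.logb 2 (Real.logb 2 ((sq q : ℕ) : ℝ))))
            else (d : ℝ)) := by
      rw [← Finset.sum_filter_add_sum_filter_not C (fun q => U.card < sq q * sq q)
          (fun q => (sq q : ℝ)
            * ((d : ℝ) - 8 * (1 + Real.logb 2 (Real.logb 2 (U.card : ℝ))))),
        ← Finset.sum_filter_add_sum_filter_not C (fun q => U.card < sq q * sq q)
          (fun q => (mq q : ℝ)),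
        ← Finset.sum_filter_add_sum_filter_not C (fun q => U.card < sq q * sq q)
          (fun q => (if 2 ≤ sq q then (sq q : ℝ)
              * ((d : ℝ) - 8 * (1 + Real.logb 2 (Real.logb 2 ((sq q : ℕ) : ℝ))))
            else (d : ℝ)))]
      have hSSsum : ∑ q ∈ C.filter (fun q => ¬ U.card < sq q * sq q),
            ((sq q : ℝ) * ((d : ℝ) - 8 * (1 + Real.logb 2 (Real.logb 2 (U.card : ℝ))))
              + 2 * (mq q : ℝ))
          ≤ ∑ q ∈ C.filter (fun q => ¬ U.card < sq q * sq q),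
            (if 2 ≤ sq q then (sq q : ℝ)
                * ((d : ℝ) - 8 * (1 + Real.logb 2 (Real.logb 2 ((sq q : ℕ) : ℝ))))
              else (d : ℝ)) := Finset.sum_le_sum hSS
      rw [Finset.sum_add_distrib, ← Finset.mul_sum] at hSSsum
      rw [← hBBgf, Finset.sum_add_distrib]
      linarith [hBIG, hC5R, hSSsum]
    have hbaseC : ∑ q ∈ C, ((sq q : ℝ)
          * ((d : ℝ) - 8 * (1 + Real.logb 2 (Real.logb 2 (U.card : ℝ)))))
        = (U.card : ℝ) * ((d : ℝ) - 8 * (1 + Real.logb 2 (Real.logb 2 (U.card : ℝ)))) := by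
      rw [← Finset.sum_mul, hssumR]
    push_cast
    nlinarith [hcastkey, hg1, hmain, hbaseC]






/-- Let `G` be a `d`-dimensional weakly dual systolic graph and `U` a set of
`s > 1` vertices.  Then `φ_G(U) = ∂(U)/|U| ≥ d − 8(1 + log₂ log₂ s)`. -/
theorem weaklyDualSystolic_isoperimetry {V : Type} [Fintype V] [DecidableEq V] {d : ℕ}
    (G : EdgeColoredGraph V d) (hG : G.IsWeaklyDualSystolic)
    (U : Finset V) (hU : 1 < U.card) :
    (G.boundary U : ℝ) / U.card
      ≥ d - 8 * (1 + Real.logb 2 (Real.logb 2 U.card)) := by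
  have h := wds_key d V G hG U hU
  have hpos : (0:ℝ) < (U.card : ℝ) := by
    have : (2:ℝ) ≤ (U.card : ℝ) := by exact_mod_cast hU
    linarith
  rw [ge_iff_le, le_div_iff₀ hpos]
  nlinarith [h]
end

section
/- Let g: [1,∞) → [0,∞) be monotone non-decreasing with g(2) ≥ 1, such that for every weakly dual systolic graph G of dimension d and every nonempty vertex set U of size s, φ_G(U) ≥ d − g(s). Then for every ε > 0, the function s ↦ g(2^{4/ε}) + ε·log₂ s has the same property. -/
/-- `g` is a dimension-independent bounding function: for every weakly dual
systolic graph `G` of dimension `d` and every nonempty vertex set `U` of size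
`s`, `φ_G(U) = ∂(U)/|U| ≥ d − g(s)`. -/
def IsBoundingFunction (g : ℝ → ℝ) : Prop :=
  ∀ (d : ℕ) (V : Type) (_ : Fintype V) (_ : DecidableEq V)
    (G : EdgeColoredGraph V d), G.IsWeaklyDualSystolic →
    ∀ U : Finset V, U.Nonempty →
      (G.boundary U : ℝ) / U.card ≥ d - g U.card


open Real

lemma logb_ge_sub_one {u : ℝ} (h1 : 1 ≤ u) (h2 : u ≤ 2) : u - 1 ≤ Real.logb 2 u := by
  have ht0 : (0:ℝ) ≤ u - 1 := by linarith
  have ht1 : u - 1 ≤ 1 := by linarith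
  have hconv := convexOn_exp.2 (Set.mem_univ (0:ℝ)) (Set.mem_univ (Real.log 2))
    (by linarith : (0:ℝ) ≤ 1 - (u-1)) ht0 (by ring)
  simp only [smul_eq_mul, mul_zero, zero_add, Real.exp_zero, mul_one,
    Real.exp_log two_pos] at hconv
  have hpow : (2:ℝ) ^ (u-1) ≤ u := by
    have h2t : (2:ℝ) ^ (u-1) = Real.exp (Real.log 2 * (u-1)) := Real.rpow_def_of_pos two_pos _
    rw [h2t, mul_comm]
    calc Real.exp ((u-1) * Real.log 2) ≤ 1 - (u-1) + (u-1) * 2 := hconv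
    _ = u := by ring
  calc u - 1 = Real.logb 2 ((2:ℝ) ^ (u-1)) := (Real.logb_rpow two_pos (by norm_num)).symm
  _ ≤ Real.logb 2 u := Real.logb_le_logb_of_le (by norm_num) (Real.rpow_pos_of_pos two_pos _) hpow

lemma num_key (ε : ℝ) (hε : 0 < ε) (hε2 : ε < 2) (u : ℝ) (huε : ε ≤ u) (hu2 : u < 2) :
    ε * (1 - Real.logb 2 u) ≤ 4 - 2 * u := by
  have hu0 : 0 < u := lt_of_lt_of_le hε huε
  by_cases hu1 : 1 ≤ u
  · have hlb : u - 1 ≤ Real.logb 2 u := logb_ge_sub_one hu1 hu2.le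
    have hub : Real.logb 2 u ≤ 1 := by
      rw [Real.logb_le_iff_le_rpow (by norm_num) hu0, Real.rpow_one]; linarith
    nlinarith [mul_nonneg (by linarith : (0:ℝ) ≤ 2 - ε)
      (by linarith : (0:ℝ) ≤ 1 - Real.logb 2 u)]
  · push_neg at hu1
    have hε1 : ε < 1 := lt_of_le_of_lt huε hu1
    have hl2 : (0.6931471803:ℝ) < Real.log 2 := Real.log_two_gt_d9
    have hl2pos : (0:ℝ) < Real.log 2 := by linarith
    have hlog : -Real.log u ≤ 1/u - 1 := by
      have := Real.log_le_sub_one_of_pos (x := 1/u) (by positivity)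
      rw [one_div, Real.log_inv] at this
      rw [one_div]; linarith
    have hdiv : ε * (1/u) ≤ 1 := by
      rw [mul_one_div, div_le_one hu0]; exact huε
    have h1 : ε * (-Real.log u) ≤ 1 - ε := by
      have hmul : ε * (-Real.log u) ≤ ε * (1/u - 1) :=
        mul_le_mul_of_nonneg_left hlog hε.le
      have : ε * (1/u - 1) = ε * (1/u) - ε := by ring
      linarith
    have h2' : ε * (-(Real.log u / Real.log 2)) ≤ (1-ε)/0.6931471803 := by
      have e1 : ε * (-(Real.log u / Real.log 2)) = (ε * (-Real.log u))/Real.log 2 := by ring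
      rw [e1]
      calc (ε * (-Real.log u))/Real.log 2 ≤ (1-ε)/Real.log 2 := by gcongr
      _ ≤ (1-ε)/0.6931471803 := by
            apply div_le_div_of_nonneg_left (by linarith) (by norm_num) (by linarith)
    have hlogb : Real.logb 2 u = Real.log u / Real.log 2 := rfl
    rw [hlogb]
    have e2 : ε * (1 - Real.log u / Real.log 2) = ε + ε * (-(Real.log u / Real.log 2)) := by ring
    rw [e2]
    have : (1-ε)/0.6931471803 ≤ (1-ε) * 1.45 := by
      rw [div_eq_mul_inv]
      apply mul_le_mul_of_nonneg_left (by norm_num) (by linarith)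
    nlinarith

lemma num_main (ε : ℝ) (hε : 0 < ε) (j : ℕ) (hj : 1 ≤ j) (n s : ℝ) (hn : 1 ≤ n)
    (hs1 : (2:ℝ) ^ (4/ε) ≤ s) (hs2 : ((j:ℝ)+1) * n ≤ s) :
    2 * min n (j:ℝ) ≤ ε * (n * Real.logb 2 (s/n)) := by
  have hn0 : 0 < n := lt_of_lt_of_le one_pos hn
  have hj1 : (1:ℝ) ≤ (j:ℝ) := by exact_mod_cast hj
  have hs0 : 0 < s := lt_of_lt_of_le (Real.rpow_pos_of_pos two_pos _) hs1
  have hsn2 : 2 ≤ s / n := by rw [le_div_iff₀ hn0]; nlinarith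
  set L := Real.logb 2 (s/n) with hLdef
  have hL1 : 1 ≤ L := by
    rw [hLdef, Real.le_logb_iff_rpow_le (by norm_num) (by positivity), Real.rpow_one]
    exact hsn2
  have hpow : (2:ℝ) ^ L = s / n := Real.rpow_logb two_pos (by norm_num) (by positivity)
  by_cases hcase : 2 ≤ ε * L
  · calc 2 * min n (j:ℝ) ≤ 2 * n := by nlinarith [min_le_left n (j:ℝ)]
    _ ≤ (ε * L) * n := by nlinarith
    _ = ε * (n * L) := by ring
  · push_neg at hcase
    set u := ε * L with hu
    have hL0 : 0 < L := by linarith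
    have hu0 : 0 < u := mul_pos hε hL0
    have huε : ε ≤ u := by nlinarith
    have hε2 : ε < 2 := lt_of_le_of_lt huε hcase
    have hkey := num_key ε hε hε2 u huε hcase
    have hexp : L + 1 ≤ Real.logb 2 u + (4/ε - L) := by
      have h4 : ε * (4/ε) = 4 := by field_simp
      have hεle : ε * (L+1) ≤ ε * (Real.logb 2 u + (4/ε - L)) := by
        have e3 : ε * (L + 1) = u + ε := by rw [hu]; ring
        have e4 : ε * (Real.logb 2 u + (4/ε - L)) = ε * Real.logb 2 u + ε * (4/ε) - u := by
          rw [hu]; ring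
        rw [e3, e4, h4]
        have hkey' : ε - ε * Real.logb 2 u ≤ 4 - 2*u := by nlinarith [hkey]
        linarith
      exact le_of_mul_le_mul_left hεle hε
    have hjle : (j:ℝ) + 1 ≤ (2:ℝ)^L := by rw [hpow, le_div_iff₀ hn0]; exact hs2
    have hnlow : (2:ℝ)^(4/ε - L) ≤ n := by
      have e5 : (2:ℝ)^(4/ε-L) = (2:ℝ)^(4/ε) / (2:ℝ)^L := Real.rpow_sub two_pos _ _
      rw [e5, hpow, div_le_iff₀ (by positivity)]
      have e6 : n * (s/n) = s := by field_simp
      rw [e6]; exact hs1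
    have hchain : 2 * ((j:ℝ)) ≤ u * n := by
      have c2 : (2:ℝ)^(L+1) = 2 * (2:ℝ)^L := by
        rw [Real.rpow_add two_pos, Real.rpow_one]; ring
      have c3 : (2:ℝ)^(L+1) ≤ (2:ℝ)^(Real.logb 2 u + (4/ε - L)) :=
        Real.rpow_le_rpow_of_exponent_le (by norm_num) hexp
      have c4 : (2:ℝ)^(Real.logb 2 u + (4/ε - L)) = u * (2:ℝ)^(4/ε - L) := by
        rw [Real.rpow_add two_pos, Real.rpow_logb two_pos (by norm_num) hu0]
      have c5 : u * (2:ℝ)^(4/ε - L) ≤ u * n := mul_le_mul_of_nonneg_left hnlow hu0.le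
      linarith
    calc 2 * min n (j:ℝ) ≤ 2 * (j:ℝ) := by nlinarith [min_le_right n (j:ℝ)]
    _ ≤ u * n := hchain
    _ = ε * (n * L) := by rw [hu]; ring

/-- The bootstrapping lemma: if `g : [1,∞) → [0,∞)` is monotone
non-decreasing with `g(2) ≥ 1` and is a dimension-independent bounding
function, then for every `ε > 0` so is `s ↦ g(2^(4/ε)) + ε·log₂ s`. -/

theorem bootstrap (g : ℝ → ℝ) (hnonneg : ∀ s, 1 ≤ s → 0 ≤ g s)
    (hmono : ∀ x y, 1 ≤ x → x ≤ y → g x ≤ g y) (h2 : 1 ≤ g 2)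
    (hg : IsBoundingFunction g) (ε : ℝ) (hε : 0 < ε) :
    IsBoundingFunction (fun s => g (2 ^ (4 / ε)) + ε * Real.logb 2 s) := by
  have hK1 : (1:ℝ) ≤ (2:ℝ)^((4:ℝ)/ε) := by
    have h0 : (2:ℝ)^(0:ℝ) ≤ (2:ℝ)^((4:ℝ)/ε) :=
      Real.rpow_le_rpow_of_exponent_le one_le_two (by positivity)
    rwa [Real.rpow_zero] at h0
  have hgK0 : 0 ≤ g ((2:ℝ)^((4:ℝ)/ε)) := hnonneg _ hK1
  intro d
  induction d with
  | zero =>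
    intro V instF instD G hsys U hU
    have hcard1 : (1:ℝ) ≤ (U.card:ℝ) := by exact_mod_cast hU.card_pos
    have hb0 : (G.boundary U : ℝ) = 0 := by
      simp [EdgeColoredGraph.boundary]
    rw [ge_iff_le, hb0, zero_div]
    have hlog0 : 0 ≤ Real.logb 2 (U.card:ℝ) := Real.logb_nonneg one_lt_two hcard1
    simp only [Nat.cast_zero, zero_sub, neg_nonpos]
    positivity
  | succ d IH =>
    intro V instF instD G hsys U hU
    classical
    have hcard1 : (1:ℝ) ≤ (U.card:ℝ) := by exact_mod_cast hU.card_pos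
    have hs0 : (0:ℝ) < (U.card:ℝ) := by linarith
    by_cases hsle : (U.card:ℝ) ≤ (2:ℝ)^((4:ℝ)/ε)
    · have h := hg (d+1) V instF instD G hsys U hU
      have hmg : g (U.card:ℝ) ≤ g ((2:ℝ)^((4:ℝ)/ε)) := hmono _ _ hcard1 hsle
      have hlog0 : 0 ≤ ε * Real.logb 2 (U.card:ℝ) :=
        mul_nonneg hε.le (Real.logb_nonneg one_lt_two hcard1)
      rw [ge_iff_le] at h ⊢
      refine le_trans ?_ h
      simp only []
      linarith
    · push_neg at hsle
      obtain ⟨hpc, hsimp, hcomp⟩ := hsys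
      have htop : ∀ v : V, ¬ G.ReachIn {i | i ≠ Fin.last d} v (G.m (Fin.last d) v) := hpc.1
      -- symmetry of reachability
      have hsymR : ∀ {a b : V}, G.ReachIn {i | i ≠ Fin.last d} a b →
          G.ReachIn {i | i ≠ Fin.last d} b a := by
        have hs : Symmetric (fun a b : V =>
            ∃ i ∈ {i : Fin (d+1) | i ≠ Fin.last d}, G.m i a = b) := by
          rintro a b ⟨i, hi, rfl⟩
          exact ⟨i, hi, G.invol i a⟩
        intro a b h
        exact (@Relation.ReflTransGen.stdSymm _ _ ⟨fun a b h => hs h⟩).symm _ _ h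
      have htrans : ∀ {a b c : V}, G.ReachIn {i | i ≠ Fin.last d} a b →
          G.ReachIn {i | i ≠ Fin.last d} b c → G.ReachIn {i | i ≠ Fin.last d} a c :=
        fun h1 h2 => Relation.ReflTransGen.trans h1 h2
      have hrefl : ∀ v : V, G.ReachIn {i | i ≠ Fin.last d} v v :=
        fun v => Relation.ReflTransGen.refl
      -- components
      set c : V → Finset V :=
        fun v => Finset.univ.filter (fun u => G.ReachIn {i | i ≠ Fin.last d} v u) with hc
      have hmemc : ∀ v u : V, u ∈ c v ↔ G.ReachIn {i | i ≠ Fin.last d} v u := by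
        intro v u; simp [hc]
      have hvc : ∀ v : V, v ∈ c v := fun v => (hmemc v v).2 (hrefl v)
      have hceq : ∀ {v u : V}, G.ReachIn {i | i ≠ Fin.last d} v u → c v = c u := by
        intro v u h
        ext x
        rw [hmemc, hmemc]
        exact ⟨fun hx => htrans (hsymR h) hx, fun hx => htrans h hx⟩
      set K : Finset (Finset V) := U.image c with hK
      set nn : Finset V → ℕ := fun A => (U.filter (fun v => v ∈ A)).card with hnn
      have hcv_eq : ∀ {A : Finset V} {v : V}, A ∈ K → v ∈ A → c v = A := by
        intro A v hA hv
        obtain ⟨w, hwU, rfl⟩ := Finset.mem_image.1 hA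
        exact (hceq ((hmemc w v).1 hv)).symm
      -- fiberwise decomposition
      have hfiber : ∀ W : Finset V, W ⊆ U →
          W.card = ∑ A ∈ K, (W.filter (fun v => v ∈ A)).card := by
        intro W hW
        rw [Finset.card_eq_sum_card_fiberwise
          (f := c) (t := K) (fun v hv => Finset.mem_image_of_mem c (hW hv))]
        refine Finset.sum_congr rfl (fun A hA => ?_)
        refine congrArg Finset.card (Finset.filter_congr (fun v _ => ?_))
        constructor
        · intro h; rw [← h]; exact hvc v
        · intro h; exact hcv_eq hA h
      have hpart : U.card = ∑ A ∈ K, nn A := hfiber U (subset_refl U)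
      have hnA_pos : ∀ A ∈ K, 1 ≤ nn A := by
        intro A hA
        obtain ⟨w, hwU, rfl⟩ := Finset.mem_image.1 hA
        exact Finset.card_pos.2 ⟨w, Finset.mem_filter.2 ⟨hwU, hvc w⟩⟩
      have hnA_le : ∀ A : Finset V, nn A ≤ U.card := fun A => Finset.card_filter_le U _
      -- strict order on components
      set r' : Finset V → Finset V → Prop :=
        fun B A => nn A < nn B ∨ (nn B = nn A ∧ WellOrderingRel B A) with hr'
      have hr'_irrefl : ∀ A, ¬ r' A A := by
        rintro A (h | ⟨_, h⟩)
        · exact lt_irrefl _ h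
        · exact irrefl A h
      have hr'_total : ∀ {A B : Finset V}, A ≠ B → r' A B ∨ r' B A := by
        intro A B hne
        rcases lt_trichotomy (nn A) (nn B) with h | h | h
        · right; left; exact h
        · rcases trichotomous_of WellOrderingRel A B with hw | he | hw
          · left; right; exact ⟨h, hw⟩
          · exact absurd he hne
          · right; right; exact ⟨h.symm, hw⟩
        · left; left; exact h
      have hr'_asymm : ∀ {A B : Finset V}, r' A B → r' B A → False := by
        rintro A B (h1 | ⟨e1, w1⟩) (h2 | ⟨e2, w2⟩)
        · exact lt_irrefl _ (h1.trans h2)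
        · omega
        · omega
        · exact irrefl A (IsTrans.trans A B A w1 w2)
      have hr'_le : ∀ {A B : Finset V}, r' B A → nn A ≤ nn B := by
        rintro A B (h | ⟨e, _⟩)
        · exact h.le
        · exact e.ge
      set ρ : Finset V → ℕ := fun A => (K.filter (fun B => r' B A)).card with hρ
      have hrank : ∀ A ∈ K, (ρ A + 1) * nn A ≤ U.card := by
        intro A hA
        have hsub : insert A (K.filter (fun B => r' B A)) ⊆ K := by
          intro B hB
          rcases Finset.mem_insert.1 hB with rfl | hB
          · exact hA
          · exact Finset.filter_subset _ _ hB
        have hcardins : (insert A (K.filter fun B => r' B A)).card = ρ A + 1 := by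
          rw [Finset.card_insert_of_notMem]
          intro hmem
          exact hr'_irrefl A (Finset.mem_filter.1 hmem).2
        calc (ρ A + 1) * nn A
            = ∑ _B ∈ insert A (K.filter fun B => r' B A), nn A := by
              rw [Finset.sum_const, hcardins, smul_eq_mul]
          _ ≤ ∑ B ∈ insert A (K.filter fun B => r' B A), nn B := by
              refine Finset.sum_le_sum (fun B hB => ?_)
              rcases Finset.mem_insert.1 hB with rfl | hB
              · exact le_rfl
              · exact hr'_le (Finset.mem_filter.1 hB).2
          _ ≤ ∑ B ∈ K, nn B := Finset.sum_le_sum_of_subset hsub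
          _ = U.card := hpart.symm
      -- top-colored matching
      set mt : V → V := G.m (Fin.last d) with hmt
      have hne_comp : ∀ v : V, c v ≠ c (mt v) := by
        intro v h
        apply htop v
        have := hvc (mt v)
        rw [← h] at this
        exact (hmemc v (mt v)).1 this
      set Aset : Finset V := U.filter (fun v => mt v ∈ U ∧ r' (c (mt v)) (c v)) with hAset
      set Bset : Finset V := U.filter (fun v => mt v ∈ U ∧ r' (c v) (c (mt v))) with hBset
      set Qset : Finset V := U.filter (fun v => mt v ∈ U) with hQset
      have hQsplit : Qset.card = Aset.card + Bset.card := by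
        have hun : Aset ∪ Bset = Qset := by
          ext v
          simp only [hAset, hBset, hQset, Finset.mem_union, Finset.mem_filter]
          constructor
          · rintro (⟨h1, h2, _⟩ | ⟨h1, h2, _⟩) <;> exact ⟨h1, h2⟩
          · rintro ⟨h1, h2⟩
            rcases hr'_total (hne_comp v) with h | h
            · right; exact ⟨h1, h2, h⟩
            · left; exact ⟨h1, h2, h⟩
        have hdisj : Disjoint Aset Bset := by
          rw [hAset, hBset, Finset.disjoint_filter]
          rintro v _ ⟨_, h1⟩ ⟨_, h2⟩
          exact hr'_asymm h1 h2
        rw [← hun, Finset.card_union_of_disjoint hdisj]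
      have hAB : Aset.card = Bset.card := by
        refine Finset.card_bij' (fun v _ => mt v) (fun v _ => mt v) ?_ ?_ ?_ ?_
        · intro v hv
          rw [hAset, Finset.mem_filter] at hv
          obtain ⟨h1, h2, h3⟩ := hv
          rw [hBset, Finset.mem_filter]
          have hinv : mt (mt v) = v := G.invol _ v
          rw [hinv]
          exact ⟨h2, h1, h3⟩
        · intro v hv
          rw [hBset, Finset.mem_filter] at hv
          obtain ⟨h1, h2, h3⟩ := hv
          rw [hAset, Finset.mem_filter]
          have hinv : mt (mt v) = v := G.invol _ v
          rw [hinv]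
          exact ⟨h2, h1, h3⟩
        · intro v _; exact G.invol _ v
        · intro v _; exact G.invol _ v
      have hQ2 : Qset.card = 2 * Aset.card := by omega
      have hAfib : Aset.card = ∑ A ∈ K, (Aset.filter (fun v => v ∈ A)).card :=
        hfiber Aset (Finset.filter_subset _ _)
      have ha_le1 : ∀ A : Finset V, (Aset.filter (fun v => v ∈ A)).card ≤ nn A := by
        intro A
        exact Finset.card_le_card
          (Finset.filter_subset_filter _ (Finset.filter_subset _ _))
      have ha_le2 : ∀ A ∈ K, (Aset.filter (fun v => v ∈ A)).card ≤ ρ A := by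
        intro A hA
        refine Finset.card_le_card_of_injOn (fun v => c (mt v)) ?_ ?_
        · intro v hv
          rw [Finset.mem_coe, Finset.mem_filter, hAset, Finset.mem_filter] at hv
          obtain ⟨⟨hvU, hvmU, hvr⟩, hvA⟩ := hv
          refine Finset.mem_filter.2 ⟨Finset.mem_image_of_mem c hvmU, ?_⟩
          rwa [hcv_eq hA hvA] at hvr
        · intro v hv v' hv' heq
          simp only [Finset.coe_filter, Set.mem_setOf_eq] at hv hv'
          obtain ⟨hvA, hvAmem⟩ := hv
          obtain ⟨hv'A, hv'Amem⟩ := hv'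
          rw [hAset, Finset.mem_filter] at hvA hv'A
          have hcv : c v = A := hcv_eq hA hvAmem
          have hcv' : c v' = A := hcv_eq hA hv'Amem
          have hRvv' : G.ReachIn {i | i ≠ Fin.last d} v v' := by
            have : v' ∈ c v := by rw [hcv, ← hcv']; exact hvc v'
            exact (hmemc v v').1 this
          have hRmm : G.ReachIn {i | i ≠ Fin.last d} (mt v) (mt v') := by
            have heq2 : c (mt v) = c (mt v') := heq
            have : mt v' ∈ c (mt v) := by rw [heq2]; exact hvc (mt v')
            exact (hmemc (mt v) (mt v')).1 this
          exact hsimp v v' hRvv' hRmm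
      -- per-component numeric bound
      have hApt : ∀ A ∈ K, 2 * ((Aset.filter (fun v => v ∈ A)).card : ℝ) ≤
          ε * ((nn A : ℝ) * Real.logb 2 ((U.card : ℝ) / (nn A : ℝ))) := by
        intro A hA
        have hn1 : (1:ℝ) ≤ (nn A : ℝ) := by exact_mod_cast hnA_pos A hA
        have hn0 : (0:ℝ) < (nn A : ℝ) := by linarith
        by_cases hρ0 : ρ A = 0
        · have ha0 : (Aset.filter (fun v => v ∈ A)).card = 0 :=
            Nat.le_zero.1 (hρ0 ▸ ha_le2 A hA)
          rw [ha0]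
          have hle : (nn A : ℝ) ≤ (U.card:ℝ) := by exact_mod_cast hnA_le A
          have hdiv1 : (1:ℝ) ≤ (U.card:ℝ)/(nn A:ℝ) := (le_div_iff₀ hn0).2 (by linarith)
          have hlog := Real.logb_nonneg one_lt_two hdiv1
          have hpos := mul_nonneg hε.le (mul_nonneg hn0.le hlog)
          norm_num
          exact hpos
        · have hρ1 : 1 ≤ ρ A := Nat.one_le_iff_ne_zero.2 hρ0
          have hcast : ((ρ A:ℝ)+1) * (nn A:ℝ) ≤ (U.card:ℝ) := by
            exact_mod_cast hrank A hA
          have hnum := num_main ε hε (ρ A) hρ1 (nn A : ℝ) (U.card : ℝ) hn1 hsle.le hcast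
          have hmin : ((Aset.filter (fun v => v ∈ A)).card : ℝ) ≤ min ((nn A):ℝ) ((ρ A):ℝ) := by
            refine le_min ?_ ?_
            · exact_mod_cast ha_le1 A
            · exact_mod_cast ha_le2 A hA
          linarith
      -- per-component lower bound from induction hypothesis
      have hcomp_bd : ∀ A ∈ K,
          (nn A : ℝ) * ((d:ℝ) - (g ((2:ℝ)^((4:ℝ)/ε)) + ε * Real.logb 2 (nn A : ℝ)))
            ≤ ((∑ i : Fin d, ((U.filter (fun v => v ∈ A)).filter
                (fun v => G.m i.castSucc v ∉ U)).card : ℕ) : ℝ) := by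
        intro A hA
        obtain ⟨w, hwU, rfl⟩ := Finset.mem_image.1 hA
        haveI instFc : Fintype (G.comp w) := Subtype.fintype _
        haveI instDc : DecidableEq (G.comp w) := inferInstance
        set Ut : Finset (G.comp w) :=
          (Finset.subtype (fun u => G.ReachIn {i | i ≠ Fin.last d} w u) U) with hUt
        have hUtne : Ut.Nonempty := ⟨⟨w, hrefl w⟩, Finset.mem_subtype.2 hwU⟩
        have hUtcard : Ut.card = nn (c w) := by
          rw [hUt]; refine (Finset.card_subtype _ _).trans ?_
          exact congrArg Finset.card (Finset.filter_congr (fun v _ => (hmemc w v).symm))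
        have hIH := IH (G.comp w) instFc instDc (G.restrict w) (hcomp w) Ut hUtne
        have hbd_res : (G.restrict w).boundary Ut =
            ∑ i : Fin d, ((U.filter (fun v => v ∈ c w)).filter
              (fun v => G.m i.castSucc v ∉ U)).card := by
          rw [EdgeColoredGraph.boundary]
          refine Finset.sum_congr rfl (fun i _ => ?_)
          refine Finset.card_bij (fun x _ => x.1) ?_ ?_ ?_
          · intro x hx
            rw [Finset.mem_filter] at hx
            obtain ⟨hx1, hx2⟩ := hx
            have hxU : x.1 ∈ U := Finset.mem_subtype.1 hx1
            refine Finset.mem_filter.2 ⟨Finset.mem_filter.2 ⟨hxU, (hmemc w x.1).2 x.2⟩, ?_⟩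
            intro hmem
            exact hx2 (Finset.mem_subtype.2 hmem)
          · intro a ha b hb hab
            exact Subtype.ext hab
          · intro v hv
            rw [Finset.mem_filter] at hv
            obtain ⟨hv1, hv2⟩ := hv
            rw [Finset.mem_filter] at hv1
            obtain ⟨hvU, hvcw⟩ := hv1
            refine ⟨⟨v, (hmemc w v).1 hvcw⟩, ?_, rfl⟩
            refine Finset.mem_filter.2 ⟨Finset.mem_subtype.2 hvU, ?_⟩
            intro hmem
            exact hv2 (Finset.mem_subtype.1 hmem)
        have hc0 : (0:ℝ) < (Ut.card : ℝ) := by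
          have := Finset.card_pos.2 hUtne
          exact_mod_cast this
        rw [ge_iff_le, le_div_iff₀ hc0] at hIH
        rw [hUtcard, hbd_res] at hIH
        calc (nn (c w):ℝ) * ((d:ℝ) - (g ((2:ℝ)^((4:ℝ)/ε)) + ε * Real.logb 2 (nn (c w):ℝ)))
            = ((d:ℝ) - (g ((2:ℝ)^((4:ℝ)/ε)) + ε * Real.logb 2 (nn (c w):ℝ))) * (nn (c w):ℝ) := by
              ring
          _ ≤ _ := hIH
      -- swap sums
      have hswap : ∑ A ∈ K, ∑ i : Fin d, ((U.filter (fun v => v ∈ A)).filter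
            (fun v => G.m i.castSucc v ∉ U)).card
          = ∑ i : Fin d, (U.filter (fun v => G.m i.castSucc v ∉ U)).card := by
        rw [Finset.sum_comm]
        refine Finset.sum_congr rfl (fun i _ => ?_)
        rw [hfiber (U.filter (fun v => G.m i.castSucc v ∉ U)) (Finset.filter_subset _ _)]
        refine Finset.sum_congr rfl (fun A _ => ?_)
        rw [Finset.filter_filter, Finset.filter_filter]
        exact congrArg Finset.card (Finset.filter_congr (fun v _ => and_comm))
      have hbdry : G.boundary U
          = (∑ i : Fin d, (U.filter (fun v => G.m i.castSucc v ∉ U)).card)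
            + (U.filter (fun v => mt v ∉ U)).card := by
        rw [EdgeColoredGraph.boundary, Fin.sum_univ_castSucc]
      have htQ : Qset.card + (U.filter (fun v => mt v ∉ U)).card = U.card := by
        rw [hQset]
        exact Finset.card_filter_add_card_filter_not _
      have hQle : (Qset.card : ℝ) ≤
          ∑ A ∈ K, ε * ((nn A:ℝ) * Real.logb 2 ((U.card:ℝ)/(nn A:ℝ))) := by
        have hQc : (Qset.card : ℝ) = 2 * ∑ A ∈ K, ((Aset.filter (fun v => v ∈ A)).card : ℝ) := by
          rw [hQ2, hAfib]
          push_cast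
          ring
        rw [hQc, Finset.mul_sum]
        exact Finset.sum_le_sum (fun A hA => hApt A hA)
      have hSle : ∑ A ∈ K, (nn A:ℝ) * ((d:ℝ) - (g ((2:ℝ)^((4:ℝ)/ε)) + ε * Real.logb 2 (nn A:ℝ)))
          ≤ ((∑ i : Fin d, (U.filter (fun v => G.m i.castSucc v ∉ U)).card : ℕ) : ℝ) := by
        rw [← hswap]
        push_cast
        refine Finset.sum_le_sum (fun A hA => ?_)
        have := hcomp_bd A hA
        push_cast at this
        exact this
      have hsum_id : ∀ A ∈ K,
          (nn A:ℝ) * ((d:ℝ) - (g ((2:ℝ)^((4:ℝ)/ε)) + ε * Real.logb 2 (nn A:ℝ)))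
            - ε * ((nn A:ℝ) * Real.logb 2 ((U.card:ℝ)/(nn A:ℝ)))
          = (nn A:ℝ) * (((d:ℝ)+1) - (g ((2:ℝ)^((4:ℝ)/ε)) + ε * Real.logb 2 (U.card:ℝ)))
            - (nn A:ℝ) := by
        intro A hA
        have hn1 : (1:ℝ) ≤ (nn A : ℝ) := by exact_mod_cast hnA_pos A hA
        have hn0 : (0:ℝ) < (nn A : ℝ) := by linarith
        rw [Real.logb_div (ne_of_gt hs0) (ne_of_gt hn0)]
        ring
      have hcast_part : (U.card:ℝ) = ∑ A ∈ K, (nn A:ℝ) := by exact_mod_cast hpart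
      have hfinal : (U.card:ℝ) * (((d:ℝ)+1) - (g ((2:ℝ)^((4:ℝ)/ε)) + ε * Real.logb 2 (U.card:ℝ)))
          ≤ (G.boundary U : ℝ) := by
        have e1 : (G.boundary U : ℝ)
            = ((∑ i : Fin d, (U.filter (fun v => G.m i.castSucc v ∉ U)).card : ℕ) : ℝ)
              + ((U.filter (fun v => mt v ∉ U)).card : ℝ) := by
          rw [hbdry]
          push_cast
          ring
        have e2 : ((U.filter (fun v => mt v ∉ U)).card : ℝ) = (U.card:ℝ) - (Qset.card:ℝ) := by
          have h := congrArg (Nat.cast : ℕ → ℝ) htQ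
          push_cast at h
          linarith
        have hsum3 : (∑ A ∈ K, (nn A:ℝ) * ((d:ℝ) - (g ((2:ℝ)^((4:ℝ)/ε)) + ε * Real.logb 2 (nn A:ℝ))))
              - ∑ A ∈ K, ε * ((nn A:ℝ) * Real.logb 2 ((U.card:ℝ)/(nn A:ℝ)))
            = (U.card:ℝ) * (((d:ℝ)+1) - (g ((2:ℝ)^((4:ℝ)/ε)) + ε * Real.logb 2 (U.card:ℝ)))
              - (U.card:ℝ) := by
          rw [← Finset.sum_sub_distrib, Finset.sum_congr rfl hsum_id,
            Finset.sum_sub_distrib, ← Finset.sum_mul, ← hcast_part]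
        rw [e1]
        linarith [hQle, hSle, hsum3, e2]
      rw [ge_iff_le, le_div_iff₀ hs0]
      refine le_trans (le_of_eq ?_) hfinal
      push_cast
      ring
end
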